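/- arXiv:1109.2503 — 9 statements merged into one kernel-verified Lean document; each statement's English description precedes it below -/
import Mathlib

section
/- Let n ≥ 1 and let q : ℕ → ℍ be quaternionic coefficients with q n ≠ 0. Then the simple quaternionic polynomial p has a zero in ℍ, i.e., there exists x ∈ ℍ such that ∑_{m=0}^{n} (q m)·x^m = 0. -/
open Polynomial Finset

noncomputable section
namespace QuatFTA

local notation "ℍ" => Quaternion ℝ


/-- conjugation transport of powers -/
lemma conj_pow_mul (g x : ℍ) (hg : g ≠ 0) (i : ℕ) :
    (g * x * g⁻¹) ^ i * g = g * x ^ i := by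
  induction i with
  | zero => simp
  | succ i ih =>
    have h1 : g * x * g⁻¹ * g = g * x := by
      rw [mul_assoc _ g⁻¹ g, inv_mul_cancel₀ hg, mul_one]
    rw [pow_succ, mul_assoc, h1, ← mul_assoc, ih, mul_assoc, ← pow_succ]

/-- evaluation of a product -/
lemma eval_mul_eq (P Q : ℍ[X]) (x : ℍ) (N : ℕ) (hN : P.natDegree < N) :
    (P * Q).eval x = ∑ i ∈ range N, P.coeff i * Q.eval x * x ^ i := by
  conv_lhs => rw [P.as_sum_range' N hN, Finset.sum_mul]
  rw [eval_finset_sum]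
  refine Finset.sum_congr rfl fun i _ => ?_
  rw [← C_mul_X_pow_eq_monomial, mul_assoc, X_pow_mul, ← mul_assoc,
    eval_mul_X_pow, eval_C_mul, mul_assoc]



lemma key_identity (n : ℕ) (q : ℕ → ℍ) (w x : ℍ) :
    ∑ m ∈ range (n+1), q m * x ^ m
      = (∑ j ∈ range n, (∑ m ∈ Finset.Ico (j+1) (n+1), w^(m-1-j) * q m) * x ^ j) * x
        - w * (∑ j ∈ range n, (∑ m ∈ Finset.Ico (j+1) (n+1), w^(m-1-j) * q m) * x ^ j)
        + ∑ m ∈ range (n+1), w ^ m * q m := by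
  set G : ℕ → ℍ := fun j => (∑ m ∈ Finset.Ico j (n+1), w^(m-j) * q m) * x ^ j with hG
  have hB : ∀ j, ((∑ m ∈ Finset.Ico (j+1) (n+1), w^(m-1-j) * q m) * x ^ j) * x = G (j+1) := by
    intro j
    rw [hG]
    simp only []
    rw [mul_assoc, ← pow_succ]
    congr 1
    refine Finset.sum_congr rfl fun m hm => ?_
    congr 2
    omega
  have hA : ∀ j < n, w * ((∑ m ∈ Finset.Ico (j+1) (n+1), w^(m-1-j) * q m) * x ^ j)
      = G j - q j * x ^ j := by
    intro j hj
    have hsplit : (∑ m ∈ Finset.Ico j (n+1), w^(m-j) * q m)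
        = q j + ∑ m ∈ Finset.Ico (j+1) (n+1), w^(m-j) * q m := by
      rw [Finset.sum_eq_sum_Ico_succ_bot (by omega : j < n + 1) (fun m => w^(m-j) * q m)]
      rw [Nat.sub_self, pow_zero, one_mul]
    have hw : w * (∑ m ∈ Finset.Ico (j+1) (n+1), w^(m-1-j) * q m)
        = ∑ m ∈ Finset.Ico (j+1) (n+1), w^(m-j) * q m := by
      rw [Finset.mul_sum]
      refine Finset.sum_congr rfl fun m hm => ?_
      rw [Finset.mem_Ico] at hm
      rw [← mul_assoc, ← pow_succ']
      congr 2
      omega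
    rw [hG]
    simp only []
    rw [hsplit, add_mul, add_sub_cancel_left, ← mul_assoc, hw]
  rw [Finset.sum_mul]
  simp only [hB]
  rw [Finset.mul_sum]
  rw [Finset.sum_congr rfl (fun j hj => hA j (Finset.mem_range.mp hj)), Finset.sum_sub_distrib]
  have h3 : ∑ m ∈ range (n+1), w ^ m * q m = G 0 := by
    rw [hG]
    simp only []
    rw [pow_zero, mul_one, Finset.range_eq_Ico]
    exact Finset.sum_congr rfl fun m _ => by rw [Nat.sub_zero]
  have h4 : ∑ j ∈ range n, G (j+1) = (∑ j ∈ range (n+1), G j) - G 0 := by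
    rw [Finset.sum_range_succ' G n]
    exact (add_sub_cancel_right _ _).symm
  rw [h3, h4, Finset.sum_range_succ G n]
  have h5 : G n = q n * x ^ n := by
    rw [hG]
    simp only []
    rw [Nat.Ico_succ_singleton]
    simp
  rw [h5, Finset.sum_range_succ]
  abel



lemma exists_complex_slice_root (R : ℝ[X]) (hR : R.degree ≠ 0) :
    ∃ x₀ : ℍ, (R.map (algebraMap ℝ ℍ)).eval x₀ = 0 := by
  obtain ⟨z, hz⟩ := IsAlgClosed.exists_root (R.map (algebraMap ℝ ℂ))
    (by rwa [degree_map_eq_of_injective (algebraMap ℝ ℂ).injective])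
  set u : ℍ := ⟨0, 1, 0, 0⟩ with hu
  have huu : u * u = -1 := by
    ext <;> simp only [Quaternion.re_mul, Quaternion.imI_mul, Quaternion.imJ_mul,
      Quaternion.imK_mul] <;> simp [hu, Quaternion.re_one, Quaternion.imI_one, Quaternion.imJ_one,
      Quaternion.imK_one]
  let ι : ℂ →ₐ[ℝ] ℍ := Complex.liftAux u huu
  refine ⟨ι z, ?_⟩
  have h1 : (R.map (algebraMap ℝ ℍ)).eval (ι z) = aeval (ι z) R := by
    rw [aeval_def, eval_map]
  have h2 : aeval (ι z) R = ι (aeval z R) := aeval_algHom_apply ι z R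
  have h3 : aeval z R = 0 := by
    rwa [aeval_def, ← eval_map] at *
  rw [h1, h2, h3, map_zero]



theorem main : ∀ n, 1 ≤ n → ∀ q : ℕ → ℍ, q n ≠ 0 →
    ∃ x : ℍ, ∑ m ∈ range (n + 1), q m * x ^ m = 0 := by
  intro n
  induction n using Nat.strong_induction_on with
  | _ n IH =>
    intro hn q hq
    rcases eq_or_lt_of_le hn with h1 | h2
    · -- base case n = 1
      subst h1
      refine ⟨-((q 1)⁻¹ * q 0), ?_⟩
      rw [Finset.sum_range_succ, Finset.sum_range_one, pow_zero, mul_one, pow_one,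
        mul_neg, ← mul_assoc, mul_inv_cancel₀ hq, one_mul, add_neg_cancel]
    · -- inductive case 2 ≤ n
      set P : ℍ[X] := ∑ m ∈ range (n+1), monomial m (q m) with hP
      set Pb : ℍ[X] := ∑ m ∈ range (n+1), monomial m (star (q m)) with hPb
      have hPc : ∀ k, P.coeff k = if k ≤ n then q k else 0 := by
        intro k
        rw [hP, finset_sum_coeff]
        simp only [coeff_monomial]
        rw [Finset.sum_ite_eq' (range (n+1)) k q]
        simp [Nat.lt_succ_iff]
      have hPbc : ∀ k, Pb.coeff k = if k ≤ n then star (q k) else 0 := by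
        intro k
        rw [hPb, finset_sum_coeff]
        simp only [coeff_monomial]
        rw [Finset.sum_ite_eq' (range (n+1)) k _]
        simp [Nat.lt_succ_iff]
      have hPdeg : P.natDegree ≤ n :=
        natDegree_le_iff_coeff_eq_zero.mpr fun N hN => by
          rw [hPc, if_neg (by omega)]
      have hPbdeg : Pb.natDegree ≤ n :=
        natDegree_le_iff_coeff_eq_zero.mpr fun N hN => by
          rw [hPbc, if_neg (by omega)]
      set F : ℍ[X] := P * Pb with hF
      have hFdeg : ∀ k, 2*n < k → F.coeff k = 0 := fun k hk =>
        coeff_eq_zero_of_natDegree_lt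
          (lt_of_le_of_lt (natDegree_mul_le.trans (add_le_add hPdeg hPbdeg)) (by omega))
      have hFstar : ∀ k, star (F.coeff k) = F.coeff k := by
        intro k
        rw [hF, coeff_mul, star_sum]
        have e1 : ∀ p ∈ Finset.HasAntidiagonal.antidiagonal k,
            star (P.coeff p.1 * Pb.coeff p.2) = P.coeff p.2 * Pb.coeff p.1 := by
          intro p _
          rw [star_mul]
          congr 1
          · rw [hPbc, hPc]; split_ifs <;> simp
          · rw [hPc, hPbc]; split_ifs <;> simp
        rw [Finset.sum_congr rfl e1]
        exact Finset.Nat.sum_antidiagonal_swap (f := fun p => P.coeff p.1 * Pb.coeff p.2)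
      have hF2n : F.coeff (2*n) = ((Quaternion.normSq (q n) : ℝ) : ℍ) := by
        rw [hF, coeff_mul]
        rw [Finset.sum_eq_single (n, n)]
        · rw [hPc, hPbc, if_pos le_rfl, if_pos le_rfl]
          exact Quaternion.self_mul_star (q n)
        · rintro ⟨i, j⟩ hij hne
          rw [Finset.HasAntidiagonal.mem_antidiagonal] at hij
          have hor : n < i ∨ n < j := by
            by_contra hcon
            push_neg at hcon
            exact hne (by simp only [Prod.mk.injEq]; omega)
          rcases hor with hi | hj
          · rw [hPc, if_neg (by omega), zero_mul]
          · rw [hPbc, if_neg (by omega), mul_zero]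
        · intro hnot
          exact absurd (Finset.HasAntidiagonal.mem_antidiagonal.mpr (by ring)) hnot
      set R : ℝ[X] := ∑ k ∈ range (2*n+1), monomial k ((F.coeff k).re) with hR
      have hRc : ∀ k, R.coeff k = if k ≤ 2*n then (F.coeff k).re else 0 := by
        intro k
        rw [hR, finset_sum_coeff]
        simp only [coeff_monomial]
        rw [Finset.sum_ite_eq' (range (2*n+1)) k _]
        simp [Nat.lt_succ_iff]
      have hmap : R.map (algebraMap ℝ ℍ) = F := by
        refine Polynomial.ext fun k => ?_
        rw [coeff_map, hRc]
        split_ifs with h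
        · have hs := hFstar k
          rw [Quaternion.star_eq_self] at hs
          exact (show (algebraMap ℝ ℍ) (F.coeff k).re = ((F.coeff k).re : ℍ) from rfl).trans
            hs.symm
        · rw [map_zero]
          exact (hFdeg k (by omega)).symm
      have hRne : R.coeff (2*n) ≠ 0 := by
        rw [hRc, if_pos le_rfl, hF2n, Quaternion.re_coe]
        exact Quaternion.normSq_ne_zero.mpr hq
      have hRdeg : R.degree ≠ 0 := by
        intro h0
        have h1 : ((2*n : ℕ) : WithBot ℕ) ≤ R.degree := le_degree_of_ne_zero hRne
        rw [h0] at h1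
        have : (2*n : ℕ) ≤ 0 := by exact_mod_cast h1
        omega
      obtain ⟨x₀, hx₀⟩ := exists_complex_slice_root R hRdeg
      rw [hmap] at hx₀
      have hgeval : Pb.eval x₀ = ∑ m ∈ range (n+1), star (q m) * x₀ ^ m := by
        rw [hPb, eval_finset_sum]
        exact Finset.sum_congr rfl fun m _ => eval_monomial
      have hPQ : ∑ i ∈ range (n+1), q i * Pb.eval x₀ * x₀ ^ i = 0 := by
        calc ∑ i ∈ range (n+1), q i * Pb.eval x₀ * x₀ ^ i
            = ∑ i ∈ range (n+1), P.coeff i * Pb.eval x₀ * x₀ ^ i :=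
              Finset.sum_congr rfl fun i hi => by
                rw [hPc, if_pos (Nat.lt_succ_iff.mp (Finset.mem_range.mp hi))]
          _ = (P * Pb).eval x₀ := (eval_mul_eq P Pb x₀ (n+1) (by omega)).symm
          _ = 0 := hx₀
      by_cases hgz : Pb.eval x₀ = 0
      · -- `P` has a right root `star x₀`; factor and recurse
        have hwroot : ∑ m ∈ range (n+1), (star x₀) ^ m * q m = 0 := by
          calc ∑ m ∈ range (n+1), (star x₀) ^ m * q m
              = ∑ m ∈ range (n+1), star (star (q m) * x₀ ^ m) :=
                Finset.sum_congr rfl fun m _ => by rw [star_mul, star_star, star_pow]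
            _ = star (∑ m ∈ range (n+1), star (q m) * x₀ ^ m) := (star_sum _ _).symm
            _ = 0 := by rw [← hgeval, hgz, star_zero]
        have hlead : (∑ m ∈ Finset.Ico ((n-1)+1) (n+1), (star x₀)^(m-1-(n-1)) * q m) = q n := by
          rw [show n - 1 + 1 = n by omega, Nat.Ico_succ_singleton, Finset.sum_singleton,
            show n - 1 - (n-1) = 0 by omega, pow_zero, one_mul]
        obtain ⟨x, hx⟩ := IH (n-1) (by omega) (by omega)
          (fun j => ∑ m ∈ Finset.Ico (j+1) (n+1), (star x₀)^(m-1-j) * q m)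
          (by show (∑ m ∈ Finset.Ico ((n-1)+1) (n+1), (star x₀)^(m-1-(n-1)) * q m) ≠ 0; rw [hlead]; exact hq)
        refine ⟨x, ?_⟩
        rw [show n - 1 + 1 = n by omega] at hx
        rw [key_identity n q (star x₀) x, hx, hwroot, zero_mul, mul_zero, sub_zero, add_zero]
      · -- conjugate `x₀` to a genuine root
        refine ⟨Pb.eval x₀ * x₀ * (Pb.eval x₀)⁻¹, ?_⟩
        have hkey : (∑ m ∈ range (n+1), q m * (Pb.eval x₀ * x₀ * (Pb.eval x₀)⁻¹) ^ m)
            * Pb.eval x₀ = 0 := by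
          rw [Finset.sum_mul]
          calc ∑ m ∈ range (n+1), q m * (Pb.eval x₀ * x₀ * (Pb.eval x₀)⁻¹) ^ m * Pb.eval x₀
              = ∑ m ∈ range (n+1), q m * Pb.eval x₀ * x₀ ^ m :=
                Finset.sum_congr rfl fun m _ => by
                  rw [mul_assoc, conj_pow_mul _ _ hgz, ← mul_assoc]
            _ = 0 := hPQ
        exact (mul_eq_zero.mp hkey).resolve_right hgz


end QuatFTA
end

/-- Any simple quaternionic polynomial equation `∑_{m=0}^{n} (q m)·xᵐ = 0` with `n ≥ 1`
and leading coefficient `q n ≠ 0` has a root in the quaternions. -/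
theorem simple_quaternionic_polynomial_has_root
    (n : ℕ) (hn : 1 ≤ n) (q : ℕ → Quaternion ℝ) (hq : q n ≠ 0) :
    ∃ x : Quaternion ℝ, ∑ m ∈ Finset.range (n + 1), q m * x ^ m = 0 :=
  QuatFTA.main n hn q hq
end

section
/- Let n ∈ ℕ and let q : ℕ → ℍ with q n ≠ 0, and let p(x) = ∑_{m=0}^{n} (q m)·x^m. Then the zero set {x ∈ ℍ | p(x) = 0} is finite if and only if it has at most n elements. -/
open Polynomial Quaternion Set

namespace QuaternionZeros

abbrev HQ := Quaternion ℝ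

lemma charId (x : HQ) :
    x ^ 2 - ((2 * x.re : ℝ) : HQ) * x + ((normSq x : ℝ) : HQ) = 0 := by
  ext <;>
    simp [pow_two, Quaternion.normSq_def', Quaternion.re_mul, Quaternion.imI_mul,
      Quaternion.imJ_mul, Quaternion.imK_mul] <;> ring

lemma re_mul_comm (x y : HQ) : (x * y).re = (y * x).re := by
  simp [Quaternion.re_mul]; ring

lemma conj_pow_key (b c : HQ) (hc : c ≠ 0) (n : ℕ) :
    (c * b * c⁻¹) ^ n * c = c * b ^ n := by
  induction n with
  | zero => simp
  | succ n ih =>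
    have h1 : (c * b * c⁻¹) * c = c * b := by
      rw [mul_assoc, inv_mul_cancel₀ hc, mul_one]
    calc (c * b * c⁻¹) ^ (n+1) * c
        = (c * b * c⁻¹) ^ n * ((c * b * c⁻¹) * c) := by rw [pow_succ, mul_assoc]
      _ = ((c * b * c⁻¹) ^ n * c) * b := by rw [h1, ← mul_assoc]
      _ = c * b ^ (n+1) := by rw [ih, pow_succ, mul_assoc]

lemma eval_mul_X_sub_C' (a b : HQ) (g : Polynomial HQ) :
    eval b (g * (X - C a)) = eval ((b-a) * b * (b-a)⁻¹) g * (b - a) := by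
  by_cases hba : b = a
  · simp [hba, Polynomial.eval_mul_X_sub_C]
  have hc : b - a ≠ 0 := sub_ne_zero.mpr hba
  induction g using Polynomial.induction_on' with
  | add p q hp hq => rw [add_mul, eval_add, hp, hq, eval_add, add_mul]
  | monomial n c =>
    rw [mul_sub, eval_sub, eval_monomial]
    have h1 : (monomial n c : Polynomial HQ) * X = monomial (n+1) c := by
      rw [← monomial_one_one_eq_X, monomial_mul_monomial, mul_one]
    have h2 : (monomial n c : Polynomial HQ) * C a = monomial n (c * a) := by
      rw [← monomial_zero_left, monomial_mul_monomial, add_zero]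
    rw [h1, h2, eval_monomial, eval_monomial]
    rw [mul_assoc c (((b-a) * b * (b-a)⁻¹) ^ n) (b - a),
      conj_pow_key b (b-a) hc n, sub_mul, mul_sub, ← pow_succ', mul_assoc]

lemma pow_factor (a : HQ) (n : ℕ) :
    ∃ g : Polynomial HQ, (X : Polynomial HQ) ^ n = g * (X - C a) + C (a ^ n) := by
  induction n with
  | zero => exact ⟨0, by simp⟩
  | succ n ih =>
    obtain ⟨g, hg⟩ := ih
    refine ⟨g * X + C (a ^ n), ?_⟩
    have hcomm : (X : Polynomial HQ) * (X - C a) = (X - C a) * X := by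
      rw [mul_sub, sub_mul, X_mul_C]
    calc (X : Polynomial HQ) ^ (n+1) = (X : Polynomial HQ) ^ n * X := pow_succ _ _
      _ = (g * (X - C a) + C (a^n)) * X := by rw [← hg]
      _ = g * X * (X - C a) + C (a^n) * X := by
          rw [add_mul, mul_assoc, ← hcomm, ← mul_assoc]
      _ = (g * X + C (a ^ n)) * (X - C a) + C (a ^ (n+1)) := by
          rw [add_mul, mul_sub (C (a^n)), ← C_mul, ← pow_succ]; noncomm_ring

lemma right_factor (f : Polynomial HQ) (a : HQ) :
    ∃ g : Polynomial HQ, f = g * (X - C a) + C (f.eval a) := by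
  induction f using Polynomial.induction_on' with
  | add p q hp hq =>
    obtain ⟨gp, hgp⟩ := hp
    obtain ⟨gq, hgq⟩ := hq
    refine ⟨gp + gq, ?_⟩
    rw [eval_add, C_add, add_mul]
    calc p + q = (gp * (X - C a) + C (eval a p)) + (gq * (X - C a) + C (eval a q)) := by
          rw [← hgp, ← hgq]
      _ = _ := by noncomm_ring
  | monomial n c =>
    obtain ⟨g, hg⟩ := pow_factor a n
    refine ⟨C c * g, ?_⟩
    rw [eval_monomial, ← C_mul_X_pow_eq_monomial, hg, mul_add, ← mul_assoc, ← C_mul]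

lemma conj_invariants {b c : HQ} (hc : c ≠ 0) :
    (c * b * c⁻¹).re = b.re ∧ normSq (c * b * c⁻¹) = normSq b := by
  constructor
  · rw [re_mul_comm, ← mul_assoc, inv_mul_cancel₀ hc, one_mul]
  · rw [map_mul, map_mul, map_inv₀]
    field_simp [normSq_ne_zero.mpr hc]

noncomputable def inv2 (x : HQ) : ℝ × ℝ := (x.re, normSq x)

lemma gm_aux (N : ℕ) : ∀ f : Polynomial HQ, f ≠ 0 → f.natDegree ≤ N →
    (inv2 '' {x : HQ | eval x f = 0}).encard ≤ (f.natDegree : ℕ∞) := by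
  induction N with
  | zero =>
    intro f hf hd
    rcases Set.eq_empty_or_nonempty {x : HQ | eval x f = 0} with he | ⟨a, ha⟩
    · simp [he]
    · exfalso
      have h0 : f.natDegree = 0 := Nat.le_zero.mp hd
      have := Polynomial.eq_C_of_natDegree_eq_zero h0
      rw [this] at ha
      simp only [Set.mem_setOf_eq, eval_C] at ha
      exact hf (by rw [this, ha, map_zero])
  | succ N ih =>
    intro f hf hd
    rcases Set.eq_empty_or_nonempty {x : HQ | eval x f = 0} with he | ⟨a, ha⟩
    · simp [he]
    simp only [Set.mem_setOf_eq] at ha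
    obtain ⟨g, hg⟩ := right_factor f a
    rw [ha, map_zero, add_zero] at hg
    have hgne : g ≠ 0 := by rintro rfl; exact hf (by simp [hg])
    have hdeg : f.natDegree = g.natDegree + 1 := by
      rw [hg, Polynomial.natDegree_mul' (by
        simp [Polynomial.leadingCoeff_X_sub_C, Polynomial.leadingCoeff_ne_zero.mpr hgne]),
        Polynomial.natDegree_X_sub_C]
    have hsub : inv2 '' {x : HQ | eval x f = 0} ⊆
        insert (inv2 a) (inv2 '' {x : HQ | eval x g = 0}) := by
      rintro y ⟨x, hx, rfl⟩
      simp only [Set.mem_setOf_eq] at hx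
      by_cases hxa : x = a
      · left; rw [hxa]
      · right
        have hc : x - a ≠ 0 := sub_ne_zero.mpr hxa
        rw [hg, eval_mul_X_sub_C' a x g] at hx
        have hroot : eval ((x-a) * x * (x-a)⁻¹) g = 0 := by
          rcases mul_eq_zero.mp hx with h | h
          · exact h
          · exact absurd h hc
        refine ⟨(x-a) * x * (x-a)⁻¹, hroot, ?_⟩
        obtain ⟨h1, h2⟩ := conj_invariants (b := x) hc
        simp [inv2, h1, h2]
    calc (inv2 '' {x : HQ | eval x f = 0}).encard
        ≤ (insert (inv2 a) (inv2 '' {x : HQ | eval x g = 0})).encard :=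
          Set.encard_le_encard hsub
      _ ≤ (inv2 '' {x : HQ | eval x g = 0}).encard + 1 := Set.encard_insert_le _ _
      _ ≤ (g.natDegree : ℕ∞) + 1 := add_le_add_left (ih g hgne (by omega)) 1
      _ = (f.natDegree : ℕ∞) := by rw [hdeg]; push_cast; ring

lemma eval_central_mul (u v : ℝ) (w : Polynomial HQ) (x : HQ) :
    eval x (((X:Polynomial HQ)^2 + C (u:HQ) * X + C (v:HQ)) * w)
      = eval x w * (x^2 + (u:HQ) * x + (v:HQ)) := by
  have hX2 : ((X:Polynomial HQ)^2) * w = w * X * X := by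
    rw [X_pow_mul, pow_two, mul_assoc]
  have hX1 : (C (u:HQ) * X) * w = C (u:HQ) * (w * X) := by
    rw [mul_assoc, X_mul]
  rw [add_mul, add_mul, hX2, hX1, eval_add, eval_add, eval_mul_X, eval_mul_X,
    eval_C_mul, eval_mul_X, eval_C_mul]
  rw [mul_add, mul_add]
  congr 1
  congr 1
  · rw [pow_two, ← mul_assoc]
  · rw [← mul_assoc, coe_commutes u (eval x w), mul_assoc]
  · rw [coe_commutes v (eval x w)]

lemma sphere_zero (f : Polynomial HQ) (a b : HQ) (hab : a ≠ b)
    (ha : eval a f = 0) (hb : eval b f = 0) (hre : a.re = b.re)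
    (hns : normSq a = normSq b) :
    ∀ x : HQ, x.re = a.re → normSq x = normSq a → eval x f = 0 := by
  set u : ℝ := -(2 * a.re) with hu
  set v : ℝ := normSq a with hv
  set h : Polynomial HQ := X^2 + (C (u:HQ) * X + C (v:HQ)) with hh
  have hdeg1 : degree (C (u:HQ) * X + C (v:HQ)) < 2 := by
    apply lt_of_le_of_lt (Polynomial.degree_add_le _ _)
    apply max_lt
    · refine lt_of_le_of_lt (Polynomial.degree_mul_le _ _) ?_
      apply lt_of_le_of_lt (add_le_add Polynomial.degree_C_le Polynomial.degree_X.le)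
      norm_num
    · exact lt_of_le_of_lt (Polynomial.degree_C_le) (by norm_num)
  have hmon : h.Monic := Polynomial.monic_X_pow_add hdeg1
  have hsplit : f %ₘ h + h * (f /ₘ h) = f := Polynomial.modByMonic_add_div f h
  have hkill : ∀ x : HQ, x.re = a.re → normSq x = normSq a →
      x^2 + (u:HQ) * x + (v:HQ) = 0 := by
    intro x h1 h2
    have := charId x
    rw [h1, h2] at this
    have hcast : ((u:ℝ):HQ) = -(((2 * a.re : ℝ)) : HQ) := by
      rw [hu, Quaternion.coe_neg]
    rw [hcast, neg_mul, ← sub_eq_add_neg]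
    exact this
  have hdegr : degree (f %ₘ h) ≤ 1 := by
    have h2 : degree h = 2 := by
      rw [hh]
      rw [Polynomial.degree_add_eq_left_of_degree_lt]
      · exact Polynomial.degree_X_pow 2
      · rw [Polynomial.degree_X_pow]; exact hdeg1
    have := Polynomial.degree_modByMonic_lt f hmon
    rw [h2] at this
    exact Order.le_of_lt_succ (by exact_mod_cast this)
  obtain hr := Polynomial.eq_X_add_C_of_degree_le_one hdegr
  set c1 := (f %ₘ h).coeff 1
  set c0 := (f %ₘ h).coeff 0
  have heval : ∀ x : HQ, x.re = a.re → normSq x = normSq a →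
      eval x f = c1 * x + c0 := by
    intro x h1 h2
    have e1 : eval x f = eval x (f %ₘ h) + eval x (h * (f /ₘ h)) := by
      rw [← eval_add, hsplit]
    have e2 : eval x (h * (f /ₘ h)) = 0 := by
      have := eval_central_mul u v (f /ₘ h) x
      rw [hh] at *
      rw [← add_assoc] at this ⊢
      rw [this, hkill x h1 h2, mul_zero]
    rw [e1, e2, add_zero, hr, eval_add, eval_C, eval_C_mul, eval_X]
  have hA : eval a f = c1 * a + c0 := heval a rfl rfl
  have hB : eval b f = c1 * b + c0 := heval b hre.symm hns.symm
  rw [ha] at hA; rw [hb] at hB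
  have hc1 : c1 = 0 := by
    have h4 : c1 * (a - b) = 0 := by
      rw [mul_sub, sub_eq_zero]
      exact add_right_cancel (hA.symm.trans hB)
    rcases mul_eq_zero.mp h4 with h | h
    · exact h
    · exact absurd h (sub_ne_zero.mpr hab)
  have hc0 : c0 = 0 := by rw [hc1, zero_mul, zero_add] at hA; exact hA.symm
  intro x h1 h2
  rw [heval x h1 h2, hc1, hc0, zero_mul, zero_add]

lemma normSq_sub_re_sq (a : HQ) :
    normSq a - a.re^2 = a.imI^2 + a.imJ^2 + a.imK^2 := by
  rw [Quaternion.normSq_def']; ring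

lemma sphere_infinite (a b : HQ) (hab : a ≠ b) (hre : a.re = b.re)
    (hns : normSq a = normSq b) :
    {x : HQ | x.re = a.re ∧ normSq x = normSq a}.Infinite := by
  have hδa : normSq a - a.re^2 = a.imI^2 + a.imJ^2 + a.imK^2 := normSq_sub_re_sq a
  have hδb : normSq b - b.re^2 = b.imI^2 + b.imJ^2 + b.imK^2 := normSq_sub_re_sq b
  have hpos : 0 < normSq a - a.re^2 := by
    rcases lt_or_eq_of_le (by nlinarith : (0:ℝ) ≤ normSq a - a.re^2) with h | h
    · exact h
    · exfalso
      apply hab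
      have hzb : normSq b - b.re^2 = 0 := by rw [← hre, ← hns, ← h]
      have ha1 : a.imI = 0 := by nlinarith
      have ha2 : a.imJ = 0 := by nlinarith
      have ha3 : a.imK = 0 := by nlinarith
      have hb1 : b.imI = 0 := by nlinarith
      have hb2 : b.imJ = 0 := by nlinarith
      have hb3 : b.imK = 0 := by nlinarith
      ext
      exacts [hre, by rw [ha1, hb1], by rw [ha2, hb2], by rw [ha3, hb3]]
  obtain ⟨ρ, hρ2, hρne⟩ : ∃ ρ : ℝ, ρ^2 = normSq a - a.re^2 ∧ ρ ≠ 0 :=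
    ⟨Real.sqrt (normSq a - a.re^2), Real.sq_sqrt hpos.le, by positivity⟩
  apply Set.infinite_of_injective_forall_mem
    (f := fun t : ℝ => (⟨a.re, ρ * ((1 - t^2)/(1 + t^2)), ρ * (2*t/(1 + t^2)), 0⟩ : HQ))
  · intro t1 t2 heq
    have h1 : (1:ℝ) + t1^2 > 0 := by positivity
    have h2 : (1:ℝ) + t2^2 > 0 := by positivity
    have eI : ρ * ((1 - t1^2)/(1 + t1^2)) = ρ * ((1 - t2^2)/(1 + t2^2)) :=
      congrArg QuaternionAlgebra.imI heq
    have eJ : ρ * (2*t1/(1 + t1^2)) = ρ * (2*t2/(1 + t2^2)) :=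
      congrArg QuaternionAlgebra.imJ heq
    have eI' : (1 - t1^2)*(1 + t2^2) = (1 - t2^2)*(1 + t1^2) := by
      have := mul_left_cancel₀ hρne eI
      field_simp at this
      linarith
    have eJ' : t1*(1 + t2^2) = t2*(1 + t1^2) := by
      have := mul_left_cancel₀ hρne eJ
      field_simp at this
      linarith
    have hsq : t1^2 = t2^2 := by linear_combination (-1/2 : ℝ) * eI'
    have : t1 * (1 + t2^2) = t2 * (1 + t2^2) := by linear_combination eJ' + t2 * hsq
    exact mul_right_cancel₀ (by positivity) this
  · intro t
    have h1 : (1:ℝ) + t^2 > 0 := by positivity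
    constructor
    · rfl
    · rw [Quaternion.normSq_def' (a := (⟨a.re, ρ * ((1 - t^2)/(1 + t^2)), ρ * (2*t/(1 + t^2)), 0⟩ : HQ))]
      show a.re^2 + (ρ * ((1 - t^2)/(1 + t^2)))^2 + (ρ * (2*t/(1 + t^2)))^2 + 0^2 = normSq a
      field_simp
      nlinarith [hρ2]

end QuaternionZeros

open QuaternionZeros in
/-- A simple quaternionic polynomial with `q n ≠ 0` has finitely many zeros
if and only if it has at most `n` zeros. -/
theorem finite_zero_set_iff_encard_le
    (n : ℕ) (q : ℕ → Quaternion ℝ) (hq : q n ≠ 0) :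
    {x : Quaternion ℝ | ∑ m ∈ Finset.range (n + 1), q m * x ^ m = 0}.Finite ↔
      {x : Quaternion ℝ | ∑ m ∈ Finset.range (n + 1), q m * x ^ m = 0}.encard ≤ n := by
  set f : Polynomial HQ := ∑ m ∈ Finset.range (n + 1), monomial m (q m) with hf
  have hev : ∀ x : HQ, eval x f = ∑ m ∈ Finset.range (n + 1), q m * x ^ m := by
    intro x
    rw [hf, eval_finset_sum]
    exact Finset.sum_congr rfl fun m _ => eval_monomial
  have hZ : {x : Quaternion ℝ | ∑ m ∈ Finset.range (n + 1), q m * x ^ m = 0}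
      = {x : HQ | eval x f = 0} := by
    ext x; simp [hev]
  have hfne : f ≠ 0 := by
    intro h0
    apply hq
    have := congrArg (fun p : Polynomial HQ => p.coeff n) h0
    simpa [hf, Polynomial.finset_sum_coeff, Polynomial.coeff_monomial] using this
  have hdeg : f.natDegree ≤ n := by
    rw [hf]
    apply Polynomial.natDegree_sum_le_of_forall_le
    intro m hm
    exact le_trans (Polynomial.natDegree_monomial_le _) (Finset.mem_range_succ_iff.mp hm)
  rw [hZ]
  constructor
  · intro hfin
    have hinj : Set.InjOn inv2 {x : HQ | eval x f = 0} := by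
      intro x hx y hy hxy
      by_contra hne
      simp only [inv2, Prod.mk.injEq] at hxy
      obtain ⟨h1, h2⟩ := hxy
      have hsub : {z : HQ | z.re = x.re ∧ normSq z = normSq x} ⊆ {z : HQ | eval z f = 0} :=
        fun z hz => sphere_zero f x y hne hx hy h1 h2 z hz.1 hz.2
      exact ((sphere_infinite x y hne h1 h2).mono hsub) hfin
    calc {x : HQ | eval x f = 0}.encard
        = (inv2 '' {x : HQ | eval x f = 0}).encard := (hinj.encard_image).symm
      _ ≤ (f.natDegree : ℕ∞) := gm_aux f.natDegree f hfne le_rfl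
      _ ≤ (n : ℕ∞) := by exact_mod_cast Nat.cast_le.mpr hdeg
  · intro h
    have : {x : HQ | eval x f = 0}.encard ≠ ⊤ :=
      ne_top_of_le_ne_top (by simp) h
    rwa [Set.encard_ne_top_iff] at this
end

section
/- Let n ∈ ℕ and let q : ℕ → ℍ with q n ≠ 0, and let p(x) = ∑_{m=0}^{n} (q m)·x^m. Then there exists a finite set S ⊆ ℍ with at most n elements such that every zero of p is conjugate to some element of S; that is, the zeros of p are distributed in at most n conjugacy classes of ℍ. -/
open Quaternion Polynomial Finset
noncomputable section
local notation "H" => Quaternion ℝ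


def qI : H := ⟨0,1,0,0⟩
def qJ : H := ⟨0,0,1,0⟩

lemma qI_mul_qI : qI * qI = -1 := by ext <;> simp only [Quaternion.re_mul, Quaternion.imI_mul, Quaternion.imJ_mul, Quaternion.imK_mul, Quaternion.re_neg, Quaternion.imI_neg, Quaternion.imJ_neg, Quaternion.imK_neg] <;> simp [qI]
lemma qJ_mul_qI : qJ * qI = (-qI) * qJ := by ext <;> simp only [Quaternion.re_mul, Quaternion.imI_mul, Quaternion.imJ_mul, Quaternion.imK_mul, Quaternion.re_neg, Quaternion.imI_neg, Quaternion.imJ_neg, Quaternion.imK_neg] <;> simp [qI, qJ]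
lemma qJ_ne_zero : (qJ : H) ≠ 0 := by
  intro h
  have : (qJ : H).imJ = 0 := by rw [h]; rfl
  simp [qJ] at this

def phiC : ℂ →ₐ[ℝ] H := Complex.liftAux qI qI_mul_qI

lemma phiC_apply (z : ℂ) : phiC z = (z.re : H) + z.im • qI := by
  simp [phiC, Complex.liftAux_apply]

lemma phiC_inj : Function.Injective phiC := phiC.toRingHom.injective

lemma conj_pow₀ {a z : H} (ha : a ≠ 0) (k : ℕ) :
    (a * z * a⁻¹) ^ k = a * z ^ k * a⁻¹ := by
  induction k with
  | zero => simp [mul_inv_cancel₀ ha]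
  | succ k ih => rw [pow_succ, ih, pow_succ]; simp [mul_assoc, inv_mul_cancel_left₀ ha]

lemma exists_conj_quat (x : H) :
    ∃ a : H, a ≠ 0 ∧ x = a * phiC ⟨x.re, ‖x.im‖⟩ * a⁻¹ := by
  have hz : phiC ⟨x.re, ‖x.im‖⟩ = (x.re : H) + ‖x.im‖ • qI := phiC_apply _
  by_cases him : x.im = 0
  · refine ⟨1, one_ne_zero, ?_⟩
    rw [hz, him, norm_zero, zero_smul, add_zero, one_mul, inv_one, mul_one]
    conv_lhs => rw [← Quaternion.re_add_im x, him, add_zero]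
  · set s : ℝ := ‖x.im‖ with hs
    have hs0 : 0 < s := norm_pos_iff.mpr him
    set u : H := s⁻¹ • x.im with hu
    have hure : u.re = 0 := by simp [hu]
    have hnu : ‖u‖ = 1 := by
      rw [hu, norm_smul, norm_inv, Real.norm_eq_abs, abs_of_nonneg (norm_nonneg _), ← hs,
        inv_mul_cancel₀ hs0.ne']
    have hnsq : normSq u = 1 := by
      rw [normSq_eq_norm_mul_self, hnu, one_mul]
    have huu : u * u = -1 := by
      have h1 : star u * u = ((normSq u : ℝ) : H) := star_mul_self u
      rw [Quaternion.star_eq_neg.mpr hure, hnsq, neg_mul] at h1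
      have h2 := neg_eq_iff_eq_neg.mp h1
      simpa using h2
    have hx' : x = (x.re : H) + s • u := by
      rw [hu, smul_smul, mul_inv_cancel₀ hs0.ne', one_smul, Quaternion.re_add_im]
    -- find a with a * qI = u * a
    have key : ∀ a : H, a ≠ 0 → a * qI = u * a → ∃ a : H, a ≠ 0 ∧ x = a * phiC ⟨x.re, ‖x.im‖⟩ * a⁻¹ := by
      intro a ha haq
      refine ⟨a, ha, ?_⟩
      have h3 : a * ((x.re : H) + s • qI) = ((x.re : H) + s • u) * a := by
        rw [mul_add, add_mul, mul_smul_comm, smul_mul_assoc, haq, Quaternion.coe_commutes]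
      rw [← hx'] at h3
      rw [hz, h3, mul_inv_cancel_right₀ ha]
    by_cases hcase : u = -qI
    · exact key qJ qJ_ne_zero (by rw [qJ_mul_qI, hcase])
    · refine key (1 - u * qI) ?_ ?_
      · intro h0
        apply hcase
        have h1 : u * qI = 1 := by rwa [sub_eq_zero, eq_comm] at h0
        have h2 : u * (qI * qI) = qI := by rw [← mul_assoc, h1, one_mul]
        rw [qI_mul_qI, mul_neg, mul_one, neg_eq_iff_eq_neg] at h2
        exact h2
      · rw [sub_mul, one_mul, mul_sub, mul_one, mul_assoc, qI_mul_qI, ← mul_assoc, huu]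
        simp [add_comm, sub_eq_add_neg]

variable (n : ℕ) (q : ℕ → H)

def cQ (k : ℕ) : H :=
  ∑ i ∈ range (n+1), ∑ j ∈ range (n+1), if i + j = k then star (q i) * q j else 0

def rP (k : ℕ) : ℝ := (cQ n q k).re

def PP : ℝ[X] := ∑ k ∈ range (2*n+1), C (rP n q k) * X^k

lemma cQ_star (k : ℕ) : star (cQ n q k) = cQ n q k := by
  unfold cQ
  rw [star_sum]
  rw [Finset.sum_comm]
  refine Finset.sum_congr rfl fun i _ => ?_
  rw [star_sum]
  refine Finset.sum_congr rfl fun j _ => ?_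
  by_cases h : j + i = k
  · rw [if_pos h, if_pos (by omega), star_mul, star_star]
  · rw [if_neg h, if_neg (by omega), star_zero]

lemma cQ_real (k : ℕ) : cQ n q k = ((rP n q k : ℝ) : H) := by
  have := Quaternion.star_eq_self.mp (cQ_star n q k)
  exact this

lemma aeval_PP (x : H) :
    aeval x (PP n q) = ∑ k ∈ range (2*n+1), ((rP n q k : ℝ) : H) * x ^ k := by
  simp [PP, QuaternionAlgebra.coe_algebraMap]

lemma aeval_PP' (x : H) :
    aeval x (PP n q) =
      ∑ i ∈ range (n+1), ∑ j ∈ range (n+1), star (q i) * q j * x ^ (i+j) := by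
  rw [aeval_PP]
  have h1 : ∀ k, ((rP n q k : ℝ) : H) * x ^ k = cQ n q k * x ^ k := by
    intro k; rw [← cQ_real]
  simp_rw [h1, cQ, Finset.sum_mul]
  rw [Finset.sum_comm]
  refine Finset.sum_congr rfl fun i hi => ?_
  rw [Finset.sum_comm]
  refine Finset.sum_congr rfl fun j hj => ?_
  simp_rw [ite_mul, zero_mul]
  rw [Finset.sum_ite_eq (range (2*n+1)) (i+j) (fun k => star (q i) * q j * x ^ k)]
  rw [if_pos]
  simp only [mem_range] at hi hj ⊢
  omega

lemma aeval_PP_zero {x : H} (hx : ∑ m ∈ range (n+1), q m * x ^ m = 0) :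
    aeval x (PP n q) = 0 := by
  rw [aeval_PP']
  have : ∀ i ∈ range (n+1),
      ∑ j ∈ range (n+1), star (q i) * q j * x ^ (i+j)
        = star (q i) * (∑ m ∈ range (n+1), q m * x ^ m) * x ^ i := by
    intro i _
    rw [Finset.mul_sum, Finset.sum_mul]
    refine Finset.sum_congr rfl fun j _ => ?_
    rw [pow_add, mul_assoc, mul_assoc, mul_assoc, ((Commute.refl x).pow_pow i j).eq]
  rw [Finset.sum_congr rfl this]
  simp [hx]

lemma cQ_top : cQ n q (2*n) = star (q n) * q n := by
  unfold cQ
  rw [Finset.sum_eq_single n]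
  · rw [Finset.sum_eq_single n]
    · rw [if_pos (by omega)]
    · intro j hj hjn
      rw [if_neg (by simp only [mem_range] at hj; omega)]
    · intro h; exact absurd (self_mem_range_succ n) h
  · intro i hi hin
    apply Finset.sum_eq_zero
    intro j hj
    rw [if_neg (by simp only [mem_range] at hi hj; omega)]
  · intro h; exact absurd (self_mem_range_succ n) h

lemma rP_top : rP n q (2*n) = normSq (q n) := by
  rw [rP, cQ_top, Quaternion.star_mul_self, Quaternion.re_coe]

lemma coeff_PP_top : (PP n q).coeff (2*n) = normSq (q n) := by
  rw [PP, finset_sum_coeff]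
  simp_rw [coeff_C_mul, coeff_X_pow]
  simp_rw [mul_ite, mul_one, mul_zero]
  rw [Finset.sum_ite_eq (range (2*n+1)) (2*n) (fun k => rP n q k)]
  rw [if_pos (by simp only [mem_range]; omega)]
  exact rP_top n q

lemma PP_ne_zero (hq : q n ≠ 0) : PP n q ≠ 0 := by
  intro h
  have := coeff_PP_top n q
  rw [h, coeff_zero] at this
  exact Quaternion.normSq_ne_zero.mpr hq this.symm

lemma natDegree_PP : (PP n q).natDegree ≤ 2*n := by
  refine natDegree_sum_le_of_forall_le _ _ fun k hk => ?_
  refine (natDegree_C_mul_le _ _).trans ?_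
  simp only [natDegree_X_pow, mem_range] at hk ⊢
  omega

lemma eval_PP_nonneg (t : ℝ) : 0 ≤ (PP n q).eval t := by
  have h1 : aeval ((t : ℝ) : H) (PP n q) = (((PP n q).eval t : ℝ) : H) := by
    rw [show ((t : ℝ) : H) = algebraMap ℝ H t from rfl, aeval_algebraMap_apply]
    simp [QuaternionAlgebra.coe_algebraMap]
  have h2 : aeval ((t : ℝ) : H) (PP n q)
      = star (∑ m ∈ range (n+1), q m * ((t:H)) ^ m) * (∑ m ∈ range (n+1), q m * (t:H) ^ m) := by
    rw [aeval_PP', star_sum, Finset.sum_mul]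
    refine Finset.sum_congr rfl fun i _ => ?_
    rw [Finset.mul_sum]
    refine Finset.sum_congr rfl fun j _ => ?_
    rw [star_mul]
    have hst : star ((t:H) ^ i) = (t:H) ^ i := by
      rw [← Quaternion.coe_pow, Quaternion.star_coe]
    rw [hst, pow_add]
    have hc : ∀ w : H, (t:H) ^ i * w = w * (t:H) ^ i := by
      intro w; rw [← Quaternion.coe_pow, Quaternion.coe_commutes]
    rw [mul_assoc, mul_assoc]
    conv_rhs => rw [hc]
    conv_lhs => rw [hc ((t:H)^j)]
    simp [mul_assoc]
  rw [h2, Quaternion.star_mul_self] at h1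
  have h3 : normSq (∑ m ∈ range (n+1), q m * (t:H) ^ m) = (PP n q).eval t :=
    Quaternion.coe_injective h1
  rw [← h3]
  exact normSq_nonneg

lemma mult_two_of_real_root (hq : q n ≠ 0) {t : ℝ}
    (ht : (PP n q).IsRoot t) : (X - C ((t:ℂ))) ^ 2 ∣ (PP n q).map (algebraMap ℝ ℂ) := by
  have hP0 : PP n q ≠ 0 := PP_ne_zero n q hq
  -- derivative vanishes at t since t is a global min of the nonneg polynomial
  have hmin : IsLocalMin (fun s => (PP n q).eval s) t := by
    apply Filter.Eventually.of_forall
    intro s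
    show (PP n q).eval t ≤ (PP n q).eval s
    rw [show (PP n q).eval t = 0 from ht]
    exact eval_PP_nonneg n q s
  have hder : (PP n q).derivative.IsRoot t := by
    have := hmin.deriv_eq_zero
    rwa [Polynomial.deriv] at this
  have hlt : 1 < (PP n q).rootMultiplicity t := by
    apply Polynomial.lt_rootMultiplicity_of_isRoot_iterate_derivative_of_mem_nonZeroDivisors' hP0
    · intro m hm
      interval_cases m
      · simpa using ht
      · simpa using hder
    · intro m _ hm0
      refine mem_nonZeroDivisors_of_ne_zero ?_
      exact_mod_cast Nat.cast_ne_zero.mpr hm0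
  have hdvd : (X - C t) ^ 2 ∣ PP n q := by
    rw [← Polynomial.le_rootMultiplicity_iff hP0]
    omega
  have := Polynomial.map_dvd (algebraMap ℝ ℂ) hdvd
  simpa using this

lemma card_bound (hq : q n ≠ 0) :
    ((((PP n q).map (algebraMap ℝ ℂ)).roots.toFinset.filter (fun ζ => 0 ≤ ζ.im)).card) ≤ n := by
  classical
  set PC : ℂ[X] := (PP n q).map (algebraMap ℝ ℂ) with hPC
  have hP0 : PP n q ≠ 0 := PP_ne_zero n q hq
  have hPC0 : PC ≠ 0 := Polynomial.map_ne_zero hP0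
  have hroot_iff : ∀ ζ : ℂ, ζ ∈ PC.roots ↔ aeval ζ (PP n q) = 0 := by
    intro ζ
    rw [Polynomial.mem_roots hPC0, Polynomial.IsRoot, hPC, Polynomial.eval_map, ← aeval_def]
  set T : Finset ℂ := PC.roots.toFinset with hT
  set A : Finset ℂ := T.filter (fun ζ => 0 < ζ.im) with hA
  set B : Finset ℂ := T.filter (fun ζ => ζ.im < 0) with hB
  set Z : Finset ℂ := T.filter (fun ζ => ζ.im = 0) with hZ
  have hsplit : T.filter (fun ζ => 0 ≤ ζ.im) = A ∪ Z := by
    rw [hA, hZ, ← Finset.filter_or]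
    refine Finset.filter_congr fun ζ _ => ?_
    constructor
    · intro h
      rcases lt_or_eq_of_le h with h' | h'
      · exact Or.inl h'
      · exact Or.inr h'.symm
    · intro h
      rcases h with h | h
      · exact le_of_lt h
      · exact le_of_eq h.symm
  have hAZdisj : Disjoint A Z := by
    rw [Finset.disjoint_left]
    intro ζ ha hz
    rw [hA, Finset.mem_filter] at ha
    rw [hZ, Finset.mem_filter] at hz
    exact absurd hz.2 (ne_of_gt ha.2)
  have hcards : (T.filter (fun ζ => 0 ≤ ζ.im)).card = A.card + Z.card := by
    rw [hsplit, Finset.card_union_of_disjoint hAZdisj]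
  -- conj maps A into B injectively
  have hconjroot : ∀ ζ ∈ T, (starRingEnd ℂ) ζ ∈ T := by
    intro ζ hζ
    rw [hT, Multiset.mem_toFinset, hroot_iff] at hζ ⊢
    rw [Polynomial.aeval_conj, hζ, map_zero]
  have hAB : A.card ≤ B.card := by
    apply Finset.card_le_card_of_injOn (fun ζ => (starRingEnd ℂ) ζ)
    · intro ζ hζ
      rw [Finset.mem_coe, Finset.mem_filter] at hζ
      rw [Finset.mem_coe, hB, Finset.mem_filter]
      refine ⟨hconjroot ζ hζ.1, ?_⟩
      simp only [Complex.conj_im, neg_lt_zero]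
      exact hζ.2
    · intro a _ b _ h
      exact (starRingEnd ℂ).injective h
  -- counts
  have hcount1 : ∀ ζ ∈ A ∪ B, 1 ≤ PC.roots.count ζ := by
    intro ζ hζ
    have hζT : ζ ∈ T := by
      rcases Finset.mem_union.mp hζ with h | h
      · exact (Finset.mem_filter.mp h).1
      · exact (Finset.mem_filter.mp h).1
    rw [hT, Multiset.mem_toFinset] at hζT
    exact Multiset.one_le_count_iff_mem.mpr hζT
  have hcount2 : ∀ ζ ∈ Z, 2 ≤ PC.roots.count ζ := by
    intro ζ hζ
    rw [hZ, Finset.mem_filter] at hζ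
    obtain ⟨hζT, him⟩ := hζ
    have hre : ζ = ((ζ.re : ℝ) : ℂ) := by
      apply Complex.ext
      · simp
      · simp [him]
    have hroott : (PP n q).IsRoot ζ.re := by
      rw [hT, Multiset.mem_toFinset, hroot_iff] at hζT
      rw [hre] at hζT
      have heq : aeval ((ζ.re : ℝ) : ℂ) (PP n q) = algebraMap ℝ ℂ (eval ζ.re (PP n q)) := by
        rw [aeval_def, show ((ζ.re : ℝ) : ℂ) = algebraMap ℝ ℂ ζ.re from rfl,
          Polynomial.eval₂_at_apply]
      rw [Polynomial.IsRoot]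
      apply (algebraMap ℝ ℂ).injective
      rw [map_zero, ← heq]
      exact hζT
    have hdvd := mult_two_of_real_root n q hq hroott
    rw [Polynomial.count_roots, Polynomial.le_rootMultiplicity_iff hPC0, hre, hPC]
    exact hdvd
  have hABdisj : Disjoint (A ∪ B) Z := by
    apply Finset.disjoint_union_left.mpr
    constructor
    · exact hAZdisj
    · rw [Finset.disjoint_left]
      intro ζ hb hz
      rw [hB, Finset.mem_filter] at hb
      rw [hZ, Finset.mem_filter] at hz
      exact absurd hz.2 (ne_of_lt hb.2)
  have hABsub : A ∪ B ∪ Z ⊆ T := by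
    intro ζ hζ
    rcases Finset.mem_union.mp hζ with h | h
    · rcases Finset.mem_union.mp h with h' | h'
      · exact (Finset.mem_filter.mp h').1
      · exact (Finset.mem_filter.mp h').1
    · exact (Finset.mem_filter.mp h).1
  have hABd : Disjoint A B := by
    rw [Finset.disjoint_left]
    intro ζ ha hb
    rw [hA, Finset.mem_filter] at ha
    rw [hB, Finset.mem_filter] at hb
    exact absurd hb.2 (not_lt_of_gt ha.2)
  have hsum : A.card + B.card + 2 * Z.card ≤ PC.roots.card := by
    have e1 : ∑ ζ ∈ A ∪ B ∪ Z, PC.roots.count ζ ≤ ∑ ζ ∈ T, PC.roots.count ζ :=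
      Finset.sum_le_sum_of_subset hABsub
    have e2 : ∑ ζ ∈ T, PC.roots.count ζ = Multiset.card PC.roots := by
      rw [hT]; exact Multiset.toFinset_sum_count_eq _
    have e3 : ∑ ζ ∈ A ∪ B ∪ Z, PC.roots.count ζ
        = ∑ ζ ∈ A ∪ B, PC.roots.count ζ + ∑ ζ ∈ Z, PC.roots.count ζ :=
      Finset.sum_union hABdisj
    have e4 : (A ∪ B).card ≤ ∑ ζ ∈ A ∪ B, PC.roots.count ζ := by
      rw [Finset.card_eq_sum_ones]
      exact Finset.sum_le_sum hcount1
    have e5 : 2 * Z.card ≤ ∑ ζ ∈ Z, PC.roots.count ζ := by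
      have : 2 * Z.card = ∑ _ζ ∈ Z, 2 := by rw [Finset.sum_const, smul_eq_mul, mul_comm]
      rw [this]
      exact Finset.sum_le_sum hcount2
    have e6 : (A ∪ B).card = A.card + B.card := Finset.card_union_of_disjoint hABd
    omega
  have hdeg : Multiset.card PC.roots ≤ 2 * n := by
    refine (Polynomial.card_roots' PC).trans ?_
    rw [hPC, Polynomial.natDegree_map]
    exact natDegree_PP n q
  omega


lemma aeval_PP_conj_zero {x z a : H} (ha : a ≠ 0) (hxz : x = a * z * a⁻¹)
    (hx : aeval x (PP n q) = 0) : aeval z (PP n q) = 0 := by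
  have h1 : aeval x (PP n q) = a * aeval z (PP n q) * a⁻¹ := by
    rw [aeval_PP, aeval_PP, hxz, Finset.mul_sum, Finset.sum_mul]
    refine Finset.sum_congr rfl fun k _ => ?_
    rw [conj_pow₀ ha, ← mul_assoc, ← mul_assoc, Quaternion.coe_commutes]
    simp [mul_assoc]
  have h2 : a * aeval z (PP n q) * a⁻¹ = 0 := by rw [← h1, hx]
  have h3 := congrArg (fun y => a⁻¹ * y * a) h2
  simpa [mul_assoc, inv_mul_cancel_left₀ ha, inv_mul_cancel₀ ha] using h3

end

/-- The zeros of a simple quaternionic polynomial with `q n ≠ 0` are distributed in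
at most `n` conjugacy classes: there is a finite set `S` of at most `n` quaternions
such that every zero is conjugate to some element of `S`. -/
theorem zeros_in_at_most_n_conjugacy_classes
    (n : ℕ) (q : ℕ → Quaternion ℝ) (hq : q n ≠ 0) :
    ∃ S : Finset (Quaternion ℝ), S.card ≤ n ∧
      ∀ x : Quaternion ℝ, ∑ m ∈ Finset.range (n + 1), q m * x ^ m = 0 →
        ∃ s ∈ S, ∃ a : Quaternion ℝ, a ≠ 0 ∧ x = a * s * a⁻¹ := by
  classical
  have hP0 : PP n q ≠ 0 := PP_ne_zero n q hq
  set PC : ℂ[X] := (PP n q).map (algebraMap ℝ ℂ) with hPC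
  have hPC0 : PC ≠ 0 := Polynomial.map_ne_zero hP0
  have hroot_iff : ∀ ζ : ℂ, ζ ∈ PC.roots ↔ aeval ζ (PP n q) = 0 := by
    intro ζ
    rw [Polynomial.mem_roots hPC0, Polynomial.IsRoot, hPC, Polynomial.eval_map, ← aeval_def]
  refine ⟨(PC.roots.toFinset.filter (fun ζ => 0 ≤ ζ.im)).image phiC, ?_, ?_⟩
  · exact Finset.card_image_le.trans (card_bound n q hq)
  · intro x hx
    obtain ⟨a, ha, hconj⟩ := exists_conj_quat x
    refine ⟨phiC ⟨x.re, ‖x.im‖⟩, ?_, a, ha, hconj⟩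
    rw [Finset.mem_image]
    refine ⟨⟨x.re, ‖x.im‖⟩, ?_, rfl⟩
    rw [Finset.mem_filter, Multiset.mem_toFinset, hroot_iff]
    constructor
    · have hxP : aeval x (PP n q) = 0 := aeval_PP_zero n q hx
      have hz : aeval (phiC ⟨x.re, ‖x.im‖⟩) (PP n q) = 0 :=
        aeval_PP_conj_zero n q ha hconj hxP
      rw [Polynomial.aeval_algHom_apply] at hz
      have := phiC_inj (hz.trans (map_zero phiC).symm)
      exact this
    · exact norm_nonneg _
end

section
/- Let n ∈ ℕ and let q : ℕ → ℝ be real coefficients with q n ≠ 0. Then a quaternion x ∈ ℍ satisfies ∑_{m=0}^{n} ((q m : ℍ))·x^m = 0 if and only if there exists a complex number z with ∑_{m=0}^{n} (q m : ℂ)·z^m = 0 such that x is conjugate in ℍ to the quaternion z.re + z.im·i. In other words, the quaternionic solution set is the union of the real complex roots together with the full conjugacy classes of the nonreal complex roots. -/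
noncomputable section

/-- The quaternion `a + b·i` corresponding to the complex number `z = a + b·I`. -/
def cq (z : ℂ) : Quaternion ℝ := ⟨z.re, z.im, 0, 0⟩

lemma cq_mul (z w : ℂ) : cq (z * w) = cq z * cq w := by
  apply Quaternion.ext <;>
    simp only [Quaternion.re_mul, Quaternion.imI_mul, Quaternion.imJ_mul, Quaternion.imK_mul] <;>
    simp [cq, Quaternion.re_mul, Quaternion.imI_mul, Quaternion.imJ_mul,
      Quaternion.imK_mul, Complex.mul_re, Complex.mul_im]

lemma cq_one : cq 1 = 1 := by
  apply Quaternion.ext <;> simp [cq, Quaternion.re_one, Quaternion.imI_one, Quaternion.imJ_one, Quaternion.imK_one]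

lemma cq_zero : cq 0 = 0 := by
  apply Quaternion.ext <;> simp [cq, Quaternion.re_zero, Quaternion.imI_zero, Quaternion.imJ_zero, Quaternion.imK_zero]

lemma cq_add (z w : ℂ) : cq (z + w) = cq z + cq w := by
  apply Quaternion.ext <;> simp only [Quaternion.re_add, Quaternion.imI_add, Quaternion.imJ_add, Quaternion.imK_add] <;> simp [cq]

lemma cq_pow (z : ℂ) (m : ℕ) : cq (z ^ m) = cq z ^ m := by
  induction m with
  | zero => simpa using cq_one
  | succ m ih => rw [pow_succ, pow_succ, cq_mul, ih]

lemma cq_real (r : ℝ) : cq ((r : ℂ)) = (r : Quaternion ℝ) := by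
  apply Quaternion.ext <;> simp [cq]

lemma cq_eq_zero {z : ℂ} (h : cq z = 0) : z = 0 := by
  have h1 : (cq z).re = 0 := by rw [h]; rfl
  have h2 : (cq z).imI = 0 := by rw [h]; rfl
  exact Complex.ext h1 h2

lemma cq_sum (n : ℕ) (q : ℕ → ℝ) (z : ℂ) :
    cq (∑ m ∈ Finset.range (n + 1), (q m : ℂ) * z ^ m) =
      ∑ m ∈ Finset.range (n + 1), ((q m : ℝ) : Quaternion ℝ) * (cq z) ^ m := by
  induction n with
  | zero => simp [cq_mul, cq_real, cq_pow]
  | succ n ih =>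
      rw [Finset.sum_range_succ, cq_add, ih, cq_mul, cq_real, cq_pow]
      exact (Finset.sum_range_succ
        (fun m => ((q m : ℝ) : Quaternion ℝ) * cq z ^ m) (n + 1)).symm

lemma conjPowAux {K : Type*} [DivisionRing K] (a c : K) (ha : a ≠ 0) (m : ℕ) :
    (a * c * a⁻¹) ^ m = a * c ^ m * a⁻¹ := by
  induction m with
  | zero => simp [mul_inv_cancel₀ ha]
  | succ m ih =>
      rw [pow_succ, pow_succ, ih]
      simp [mul_assoc, inv_mul_cancel_left₀ ha]

lemma conj_sum (n : ℕ) (q : ℕ → ℝ) (a c : Quaternion ℝ) (ha : a ≠ 0) :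
    ∑ m ∈ Finset.range (n + 1), ((q m : ℝ) : Quaternion ℝ) * (a * c * a⁻¹) ^ m =
      a * (∑ m ∈ Finset.range (n + 1), ((q m : ℝ) : Quaternion ℝ) * c ^ m) * a⁻¹ := by
  rw [Finset.mul_sum, Finset.sum_mul]
  refine Finset.sum_congr rfl fun m _ => ?_
  rw [conjPowAux a c ha m]
  have hcomm : ((q m : ℝ) : Quaternion ℝ) * a = a * ((q m : ℝ) : Quaternion ℝ) :=
    (Quaternion.coe_commute (q m) a).eq
  calc ((q m : ℝ) : Quaternion ℝ) * (a * c ^ m * a⁻¹)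
      = (((q m : ℝ) : Quaternion ℝ) * a) * c ^ m * a⁻¹ := by simp [mul_assoc]
    _ = (a * ((q m : ℝ) : Quaternion ℝ)) * c ^ m * a⁻¹ := by rw [hcomm]
    _ = a * (((q m : ℝ) : Quaternion ℝ) * c ^ m) * a⁻¹ := by simp [mul_assoc]

/-- Every quaternion is conjugate to a complex number. -/
lemma exists_conj (x : Quaternion ℝ) :
    ∃ z : ℂ, ∃ a : Quaternion ℝ, a ≠ 0 ∧ x = a * cq z * a⁻¹ := by
  set b := x.imI
  set c := x.imJ
  set d := x.imK
  set r : ℝ := Real.sqrt (b ^ 2 + c ^ 2 + d ^ 2) with hr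
  have hr2 : r ^ 2 = b ^ 2 + c ^ 2 + d ^ 2 := Real.sq_sqrt (by positivity)
  refine ⟨⟨x.re, r⟩, ?_⟩
  set z : ℂ := ⟨x.re, r⟩
  have hcz : cq z = ⟨x.re, r, 0, 0⟩ := rfl
  let A : Quaternion ℝ := ⟨0, b + r, c, d⟩
  by_cases hA : A = 0
  · -- degenerate case: b = -r, c = d = 0 ; conjugate by j
    have hb : b + r = 0 := congrArg QuaternionAlgebra.imI hA
    have hc : c = 0 := congrArg QuaternionAlgebra.imJ hA
    have hd : d = 0 := congrArg QuaternionAlgebra.imK hA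
    let J : Quaternion ℝ := ⟨0, 0, 1, 0⟩
    have hj : J ≠ 0 := by
      intro h
      have := congrArg QuaternionAlgebra.imJ h
      exact one_ne_zero this
    refine ⟨J, hj, ?_⟩
    have key : J * cq z = x * J := by
      apply Quaternion.ext <;>
        simp only [Quaternion.re_mul, Quaternion.imI_mul, Quaternion.imJ_mul, Quaternion.imK_mul] <;>
        simp [J, hcz, Quaternion.re_mul, Quaternion.imI_mul, Quaternion.imJ_mul,
          Quaternion.imK_mul, hc, hd] <;> linarith
    rw [key, mul_inv_cancel_right₀ hj]
  · refine ⟨A, hA, ?_⟩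
    have key : A * cq z = x * A := by
      apply Quaternion.ext <;>
        simp only [Quaternion.re_mul, Quaternion.imI_mul, Quaternion.imJ_mul, Quaternion.imK_mul] <;>
        simp [A, hcz, Quaternion.re_mul, Quaternion.imI_mul, Quaternion.imJ_mul,
          Quaternion.imK_mul] <;> nlinarith [hr2]
    rw [key, mul_inv_cancel_right₀ hA]

/-- Solving a simple quaternionic polynomial equation with *real* coefficients:
`x ∈ ℍ` is a zero iff `x` is conjugate (in `ℍ`) to some complex root `z` of the
same polynomial.  (A real root `z` is conjugate only to itself, so the solution set is
the union of the real roots together with the full conjugacy classes of the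
nonreal complex roots.) -/
theorem real_coeff_quaternionic_roots
    (n : ℕ) (q : ℕ → ℝ) (hq : q n ≠ 0) (x : Quaternion ℝ) :
    ∑ m ∈ Finset.range (n + 1), ((q m : ℝ) : Quaternion ℝ) * x ^ m = 0 ↔
      ∃ z : ℂ, (∑ m ∈ Finset.range (n + 1), (q m : ℂ) * z ^ m = 0) ∧
        ∃ a : Quaternion ℝ, a ≠ 0 ∧ x = a * cq z * a⁻¹ := by
  constructor
  · intro h
    obtain ⟨z, a, ha, hx⟩ := exists_conj x
    refine ⟨z, ?_, a, ha, hx⟩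
    rw [hx, conj_sum n q a (cq z) ha, ← cq_sum] at h
    have h2 : cq (∑ m ∈ Finset.range (n + 1), (q m : ℂ) * z ^ m) = 0 := by
      have := congrArg (fun y => a⁻¹ * y * a) h
      simpa [mul_assoc, inv_mul_cancel_left₀ ha, inv_mul_cancel₀ ha,
        mul_inv_cancel₀ ha] using this
    exact cq_eq_zero h2
  · rintro ⟨z, hz, a, ha, hx⟩
    rw [hx, conj_sum n q a (cq z) ha, ← cq_sum, hz, cq_zero, mul_zero, zero_mul]
end
end

section
/- Let n ∈ ℕ and let q : ℕ → ℂ be complex coefficients with q n ≠ 0. Then a quaternion x ∈ ℍ satisfies ∑_{m=0}^{n} ((q m : ℍ))·x^m = 0 if and only if either (i) there exists z ∈ ℂ with ∑_{m=0}^{n} (q m)·z^m = 0 and x equals the quaternion z.re + z.im·i, or (ii) there exists z ∈ ℂ such that both z and its complex conjugate conj z are roots of ∑_{m=0}^{n} (q m)·t^m and x is conjugate in ℍ to the quaternion z.re + z.im·i. -/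
noncomputable section

open Polynomial
open scoped Quaternion

namespace CQAux

@[simp] lemma cq_re (z : ℂ) : (cq z).re = z.re := rfl
@[simp] lemma cq_imI (z : ℂ) : (cq z).imI = z.im := rfl
@[simp] lemma cq_imJ (z : ℂ) : (cq z).imJ = 0 := rfl
@[simp] lemma cq_imK (z : ℂ) : (cq z).imK = 0 := rfl

/-- `cq` as a ring homomorphism. -/
def hom : ℂ →+* Quaternion ℝ where
  toFun := cq
  map_one' := by ext <;> simp
  map_mul' z w := by
    ext <;> simp [Quaternion.re_mul, Quaternion.imI_mul, Quaternion.imJ_mul, Quaternion.imK_mul]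
  map_zero' := by ext <;> simp
  map_add' z w := by ext <;> simp

@[simp] lemma hom_apply (z : ℂ) : hom z = cq z := rfl

lemma cq_eq_zero {z : ℂ} (h : cq z = 0) : z = 0 := by
  have h1 := congrArg QuaternionAlgebra.re h
  have h2 := congrArg QuaternionAlgebra.imI h
  simp at h1 h2
  exact Complex.ext h1 h2

lemma cq_real (r : ℝ) : cq (r : ℂ) = (r : Quaternion ℝ) := by
  ext <;> simp

@[simp] lemma cq_zero : cq 0 = 0 := by
  ext <;> simp

/-- every quaternion satisfies its characteristic quadratic -/
lemma quat_quad (x : Quaternion ℝ) :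
    x ^ 2 - ((2 * x.re : ℝ) : Quaternion ℝ) * x
      + ((x.re ^ 2 + x.imI ^ 2 + x.imJ ^ 2 + x.imK ^ 2 : ℝ) : Quaternion ℝ) = 0 := by
  ext <;>
    simp [pow_two, Quaternion.re_mul, Quaternion.imI_mul, Quaternion.imJ_mul,
      Quaternion.imK_mul] <;> ring

/-- the quadratic with roots `z`, `conj z` has real coefficients, so its images
commute with any quaternion. -/
lemma commute_coeff (z : ℂ) (x : Quaternion ℝ) (k : ℕ) :
    Commute (hom (((X - C z) * (X - C ((starRingEnd ℂ) z))).coeff k)) x := by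
  have him : ∀ c : ℂ, c.im = 0 → Commute (hom c) x := by
    intro c hc
    have : hom c = ((c.re : ℝ) : Quaternion ℝ) := by
      rw [hom_apply, ← cq_real]
      congr 1
      exact (Complex.ext (by simp) (by simp [hc])).symm
    rw [this]
    exact Quaternion.coe_commute _ _
  have hexp : (X - C z) * (X - C ((starRingEnd ℂ) z)) =
      X ^ 2 - C (z + (starRingEnd ℂ) z) * X + C (z * (starRingEnd ℂ) z) := by
    ring_nf
    simp [C_add, C_mul]
    ring
  rw [hexp]
  rcases k with _ | _ | _ | k
  · apply him
    simp [coeff_X_pow, Complex.mul_im]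
    ring
  · apply him
    simp [coeff_X_pow]
  · apply him
    simp [coeff_X_pow]
  · apply him
    simp [coeff_X_pow]

/-- evaluation of the real quadratic at `x` -/
lemma eval₂_mu (z : ℂ) (x : Quaternion ℝ) :
    eval₂ hom x ((X - C z) * (X - C ((starRingEnd ℂ) z))) =
      x ^ 2 - ((2 * z.re : ℝ) : Quaternion ℝ) * x
        + ((z.re ^ 2 + z.im ^ 2 : ℝ) : Quaternion ℝ) := by
  have hexp : (X - C z) * (X - C ((starRingEnd ℂ) z)) =
      X ^ 2 - C (z + (starRingEnd ℂ) z) * X + C (z * (starRingEnd ℂ) z) := by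
    ring_nf
    simp [C_add, C_mul]
    ring
  rw [hexp]
  rw [eval₂_add, eval₂_sub, eval₂_X_pow, eval₂_mul_X, eval₂_C, eval₂_C]
  have h1 : hom (z + (starRingEnd ℂ) z) = ((2 * z.re : ℝ) : Quaternion ℝ) := by
    rw [Complex.add_conj, hom_apply]
    exact cq_real _
  have h2 : hom (z * (starRingEnd ℂ) z) = ((z.re ^ 2 + z.im ^ 2 : ℝ) : Quaternion ℝ) := by
    rw [Complex.mul_conj, hom_apply]
    have : (Complex.normSq z : ℂ) = ((z.re ^ 2 + z.im ^ 2 : ℝ) : ℂ) := by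
      rw [Complex.normSq_apply]; push_cast; ring
    rw [this]
    exact cq_real _
  rw [h1, h2]


lemma sum_eq_eval₂ (n : ℕ) (q : ℕ → ℂ) (x : Quaternion ℝ) :
    ∑ m ∈ Finset.range (n + 1), cq (q m) * x ^ m =
      eval₂ hom x (∑ m ∈ Finset.range (n + 1), C (q m) * X ^ m) := by
  rw [eval₂_finset_sum]
  refine Finset.sum_congr rfl fun m _ => ?_
  rw [C_mul_X_pow_eq_monomial, eval₂_monomial, hom_apply]

lemma sum_eq_eval (n : ℕ) (q : ℕ → ℂ) (z : ℂ) :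
    ∑ m ∈ Finset.range (n + 1), q m * z ^ m =
      eval z (∑ m ∈ Finset.range (n + 1), C (q m) * X ^ m) := by
  rw [eval_finset_sum]
  simp

lemma cq_sum (n : ℕ) (q : ℕ → ℂ) (z : ℂ) :
    ∑ m ∈ Finset.range (n + 1), cq (q m) * cq z ^ m =
      cq (∑ m ∈ Finset.range (n + 1), q m * z ^ m) := by
  simp only [← hom_apply, ← map_pow, ← map_mul, ← map_sum]

lemma cq_quad (z : ℂ) :
    cq z ^ 2 - ((2 * z.re : ℝ) : Quaternion ℝ) * cq z
      + ((z.re ^ 2 + z.im ^ 2 : ℝ) : Quaternion ℝ) = 0 := by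
  have e : (z ^ 2 - ((2 * z.re : ℝ) : ℂ) * z + ((z.re ^ 2 + z.im ^ 2 : ℝ) : ℂ)) = 0 := by
    have e1 : ((2 * z.re : ℝ) : ℂ) = z + (starRingEnd ℂ) z := by
      rw [Complex.add_conj]
      try push_cast
      try ring
    have e2 : ((z.re ^ 2 + z.im ^ 2 : ℝ) : ℂ) = z * (starRingEnd ℂ) z := by
      rw [Complex.mul_conj, Complex.normSq_apply]
      try push_cast
      try ring
    rw [e1, e2]; ring
  calc cq z ^ 2 - ((2 * z.re : ℝ) : Quaternion ℝ) * cq z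
        + ((z.re ^ 2 + z.im ^ 2 : ℝ) : Quaternion ℝ)
      = hom (z ^ 2 - ((2 * z.re : ℝ) : ℂ) * z + ((z.re ^ 2 + z.im ^ 2 : ℝ) : ℂ)) := by
        simp only [map_add, map_sub, map_mul, map_pow, hom_apply, cq_real]
    _ = 0 := by rw [e, map_zero]

lemma eval₂_mu_conj (z : ℂ) (a : Quaternion ℝ) (ha : a ≠ 0) :
    eval₂ hom (a * cq z * a⁻¹) ((X - C z) * (X - C ((starRingEnd ℂ) z))) = 0 := by
  rw [eval₂_mu]
  have h2 : ∀ y w : Quaternion ℝ, a * y * a⁻¹ * (a * w * a⁻¹) = a * (y * w) * a⁻¹ := by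
    intro y w; simp only [mul_assoc, inv_mul_cancel_left₀ ha]
  have h3 : ∀ (r : ℝ) (y : Quaternion ℝ),
      (r : Quaternion ℝ) * (a * y * a⁻¹) = a * ((r : Quaternion ℝ) * y) * a⁻¹ := by
    intro r y; simp only [← mul_assoc]; rw [Quaternion.coe_commutes]
  have h4 : ∀ r : ℝ, a * (r : Quaternion ℝ) * a⁻¹ = (r : Quaternion ℝ) := by
    intro r; rw [← Quaternion.coe_commutes, mul_assoc, mul_inv_cancel₀ ha, mul_one]
  calc (a * cq z * a⁻¹) ^ 2 - ((2 * z.re : ℝ) : Quaternion ℝ) * (a * cq z * a⁻¹)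
        + ((z.re ^ 2 + z.im ^ 2 : ℝ) : Quaternion ℝ)
      = a * (cq z * cq z) * a⁻¹ - a * (((2 * z.re : ℝ) : Quaternion ℝ) * cq z) * a⁻¹
        + a * ((z.re ^ 2 + z.im ^ 2 : ℝ) : Quaternion ℝ) * a⁻¹ := by
        rw [pow_two, h2, h3, h4]
    _ = a * (cq z ^ 2 - ((2 * z.re : ℝ) : Quaternion ℝ) * cq z
          + ((z.re ^ 2 + z.im ^ 2 : ℝ) : Quaternion ℝ)) * a⁻¹ := by
        rw [pow_two]; noncomm_ring
    _ = 0 := by rw [cq_quad]; simp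

lemma degree_le_one_of_lt_two {R : Type*} [Semiring R] {p : R[X]} (h : p.degree < 2) :
    p.degree ≤ 1 := by
  rcases hd : p.degree with _ | d
  · exact bot_le
  · rw [hd] at h
    rw [WithBot.some_eq_coe] at h ⊢
    have e2 : (2 : WithBot ℕ) = ((2 : ℕ) : WithBot ℕ) := rfl
    have e1 : (1 : WithBot ℕ) = ((1 : ℕ) : WithBot ℕ) := rfl
    rw [e2] at h
    rw [e1]
    have h2 : d < 2 := WithBot.coe_lt_coe.mp h
    exact WithBot.coe_le_coe.mpr (by omega)

end CQAux


/-- Solving a simple quaternionic polynomial equation with *complex* coefficients: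
`x ∈ ℍ` is a zero iff either (i) `x` equals (the quaternion corresponding to) a complex
root `z` of the polynomial, or (ii) there is a complex root `z` such that its conjugate
is also a root and `x` is conjugate in `ℍ` to the quaternion corresponding to `z`. -/
theorem complex_coeff_quaternionic_roots
    (n : ℕ) (q : ℕ → ℂ) (hq : q n ≠ 0) (x : Quaternion ℝ) :
    ∑ m ∈ Finset.range (n + 1), cq (q m) * x ^ m = 0 ↔
      ((∃ z : ℂ, (∑ m ∈ Finset.range (n + 1), q m * z ^ m = 0) ∧ x = cq z) ∨
       (∃ z : ℂ, (∑ m ∈ Finset.range (n + 1), q m * z ^ m = 0) ∧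
          (∑ m ∈ Finset.range (n + 1), q m * ((starRingEnd ℂ) z) ^ m = 0) ∧
          ∃ a : Quaternion ℝ, a ≠ 0 ∧ x = a * cq z * a⁻¹)) := by
  classical
  constructor
  · intro h0
    have h := h0
    set Q : Polynomial ℂ := ∑ m ∈ Finset.range (n + 1), C (q m) * X ^ m with hQ
    set S : ℝ := x.imI ^ 2 + x.imJ ^ 2 + x.imK ^ 2 with hS
    set s : ℝ := Real.sqrt S with hsdef
    have hs : s ^ 2 = S := Real.sq_sqrt (by positivity)
    set z : ℂ := ⟨x.re, s⟩ with hz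
    have hzre : z.re = x.re := rfl
    have hzim : z.im = s := rfl
    set μ : Polynomial ℂ := (X - C z) * (X - C ((starRingEnd ℂ) z)) with hμ
    have hm : μ.Monic := (monic_X_sub_C z).mul (monic_X_sub_C _)
    have hμx : eval₂ CQAux.hom x μ = 0 := by
      rw [hμ, CQAux.eval₂_mu, hzre, hzim, hs]
      have hr : x.re ^ 2 + S = x.re ^ 2 + x.imI ^ 2 + x.imJ ^ 2 + x.imK ^ 2 := by
        rw [hS]; ring
      rw [hr]
      exact CQAux.quat_quad x
    have hdeg : (Q %ₘ μ).degree ≤ 1 := by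
      refine CQAux.degree_le_one_of_lt_two ?_
      have h2 := degree_modByMonic_lt Q hm
      have hd2 : μ.degree = 2 := by
        rw [hμ, degree_mul, degree_X_sub_C, degree_X_sub_C]; rfl
      rwa [hd2] at h2
    have hdecomp : eval₂ CQAux.hom x Q =
        CQAux.hom ((Q %ₘ μ).coeff 1) * x + CQAux.hom ((Q %ₘ μ).coeff 0) := by
      conv_lhs => rw [← modByMonic_add_div Q μ]
      rw [eval₂_add]
      have hmul : eval₂ CQAux.hom x (μ * (Q /ₘ μ)) =
          eval₂ CQAux.hom x (Q /ₘ μ) * eval₂ CQAux.hom x μ := by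
        rw [mul_comm]
        exact eval₂_mul_noncomm _ _ (CQAux.commute_coeff z x)
      rw [hmul, hμx, mul_zero, add_zero]
      conv_lhs => rw [eq_X_add_C_of_degree_le_one hdeg]
      rw [eval₂_add, eval₂_mul_X, eval₂_C, eval₂_C]
    rw [CQAux.sum_eq_eval₂, ← hQ, hdecomp] at h
    by_cases hα : (Q %ₘ μ).coeff 1 = 0
    · -- remainder is constant, indeed zero: μ divides Q
      rw [hα, map_zero, zero_mul, zero_add] at h
      have hβ : (Q %ₘ μ).coeff 0 = 0 := CQAux.cq_eq_zero h
      have hr0 : Q %ₘ μ = 0 := by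
        rw [eq_X_add_C_of_degree_le_one hdeg, hα, hβ]; simp
      have hdvd : μ ∣ Q := (modByMonic_eq_zero_iff_dvd hm).mp hr0
      obtain ⟨g, hg⟩ := hdvd
      have hzroot : ∑ m ∈ Finset.range (n + 1), q m * z ^ m = 0 := by
        rw [CQAux.sum_eq_eval, ← hQ, hg, hμ]
        simp
      have hzroot' : ∑ m ∈ Finset.range (n + 1), q m * ((starRingEnd ℂ) z) ^ m = 0 := by
        rw [CQAux.sum_eq_eval, ← hQ, hg, hμ]
        simp
      by_cases hx2 : x = cq ((starRingEnd ℂ) z)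
      · right
        refine ⟨(starRingEnd ℂ) z, hzroot', ?_, 1, one_ne_zero, by simp [hx2]⟩
        rwa [Complex.conj_conj]
      · right
        obtain ⟨a, hadef⟩ : ∃ a : Quaternion ℝ, a = ⟨s + x.imI, 0, -x.imK, x.imJ⟩ :=
          ⟨_, rfl⟩
        have hane : a ≠ 0 := by
          intro ha0
          apply hx2
          rw [hadef] at ha0
          have e1 : s + x.imI = 0 := congrArg QuaternionAlgebra.re ha0
          have e3 : -x.imK = 0 := congrArg QuaternionAlgebra.imJ ha0
          have e4 : x.imJ = 0 := congrArg QuaternionAlgebra.imK ha0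
          have hconj : (starRingEnd ℂ) z = ⟨x.re, -s⟩ := Complex.ext rfl rfl
          rw [hconj]
          ext
          · rfl
          · show x.imI = -s; linarith
          · show x.imJ = 0; exact e4
          · show x.imK = 0; linarith
        refine ⟨z, hzroot, hzroot', a, hane, ?_⟩
        have hs' : s ^ 2 = x.imI ^ 2 + x.imJ ^ 2 + x.imK ^ 2 := by rw [hs, hS]
        have hxa : x * a = a * cq z := by
          apply Quaternion.ext <;>
            simp only [Quaternion.re_mul, Quaternion.imI_mul, Quaternion.imJ_mul,
              Quaternion.imK_mul] <;> rw [hadef] <;> simp [hzre, hzim] <;>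
            nlinarith [hs']
        rw [← hxa, mul_assoc, mul_inv_cancel₀ hane, mul_one]
    · -- linear remainder: x is itself complex
      left
      have hαq : CQAux.hom ((Q %ₘ μ).coeff 1) ≠ 0 := fun h0 => hα (CQAux.cq_eq_zero h0)
      have h1 : CQAux.hom ((Q %ₘ μ).coeff 1) * x = -(CQAux.hom ((Q %ₘ μ).coeff 0)) :=
        eq_neg_of_add_eq_zero_left h
      have hx : x = cq (((Q %ₘ μ).coeff 1)⁻¹ * -((Q %ₘ μ).coeff 0)) := by
        have h2 : x = (CQAux.hom ((Q %ₘ μ).coeff 1))⁻¹ * -(CQAux.hom ((Q %ₘ μ).coeff 0)) := by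
          rw [← h1, inv_mul_cancel_left₀ hαq]
        rw [h2, ← map_inv₀ CQAux.hom, ← map_neg, ← map_mul, CQAux.hom_apply]
      refine ⟨_, ?_, hx⟩
      have := h0
      rw [hx, CQAux.cq_sum] at this
      by_contra hne
      exact hne (CQAux.cq_eq_zero this)
  · rintro (⟨z, hz, rfl⟩ | ⟨z, hz, hz', a, ha, rfl⟩)
    · rw [CQAux.cq_sum, hz, CQAux.cq_zero]
    · by_cases him : z.im = 0
      · have hzr : cq z = ((z.re : ℝ) : Quaternion ℝ) := by
          rw [← CQAux.cq_real]
          congr 1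
          exact (Complex.ext (by simp) (by simp [him])).symm
        have hcen : a * cq z * a⁻¹ = cq z := by
          rw [hzr, ← Quaternion.coe_commutes, mul_assoc, mul_inv_cancel₀ ha, mul_one]
        rw [hcen, CQAux.cq_sum, hz, CQAux.cq_zero]
      · have hne : z ≠ (starRingEnd ℂ) z := by
          intro hc
          apply him
          have := congrArg Complex.im hc
          simp only [Complex.conj_im] at this
          linarith
        have hco : IsCoprime (X - C z) (X - C ((starRingEnd ℂ) z)) :=
          Polynomial.isCoprime_X_sub_C_of_isUnit_sub
            (isUnit_iff_ne_zero.mpr (sub_ne_zero_of_ne hne))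
        have d1 : (X - C z) ∣ ∑ m ∈ Finset.range (n + 1), C (q m) * X ^ m :=
          dvd_iff_isRoot.mpr (by rw [IsRoot, ← CQAux.sum_eq_eval]; exact hz)
        have d2 : (X - C ((starRingEnd ℂ) z)) ∣ ∑ m ∈ Finset.range (n + 1), C (q m) * X ^ m :=
          dvd_iff_isRoot.mpr (by rw [IsRoot, ← CQAux.sum_eq_eval]; exact hz')
        obtain ⟨g, hg⟩ := hco.mul_dvd d1 d2
        rw [CQAux.sum_eq_eval₂, hg, mul_comm,
          eval₂_mul_noncomm _ _ (CQAux.commute_coeff z (a * cq z * a⁻¹)),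
          CQAux.eval₂_mu_conj z a ha, mul_zero]
end
end

section
/- Let n ∈ ℕ and let q : ℕ → ℍ with q n ≠ 0, and let p(x) = ∑_{m=0}^{n} (q m)·x^m. Then there exists a finite set S ⊆ ℍ with at most ⌊n/2⌋ elements such that every spherical zero of p is conjugate to some element of S; that is, the spherical zeros of p are distributed in at most ⌊n/2⌋ conjugacy classes. -/
/-- `x` is a zero of the simple quaternionic polynomial `∑_{m=0}^{n} (q m)·xᵐ`. -/
def IsZero (n : ℕ) (q : ℕ → Quaternion ℝ) (x : Quaternion ℝ) : Prop :=
  ∑ m ∈ Finset.range (n + 1), q m * x ^ m = 0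

/-- `x` is a spherical zero: it is a nonreal zero all of whose conjugates are also zeros. -/
def IsSphericalZero (n : ℕ) (q : ℕ → Quaternion ℝ) (x : Quaternion ℝ) : Prop :=
  IsZero n q x ∧ ¬(x.imI = 0 ∧ x.imJ = 0 ∧ x.imK = 0) ∧
    ∀ y : Quaternion ℝ, (∃ a : Quaternion ℝ, a ≠ 0 ∧ y = a * x * a⁻¹) → IsZero n q y

namespace SphAux

noncomputable section
open Quaternion Polynomial

def qmk (a b c d : ℝ) : Quaternion ℝ := ⟨a, b, c, d⟩

@[simp] lemma qmk_re (a b c d : ℝ) : (qmk a b c d).re = a := rfl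
@[simp] lemma qmk_imI (a b c d : ℝ) : (qmk a b c d).imI = b := rfl
@[simp] lemma qmk_imJ (a b c d : ℝ) : (qmk a b c d).imJ = c := rfl
@[simp] lemma qmk_imK (a b c d : ℝ) : (qmk a b c d).imK = d := rfl

def jq : Quaternion ℝ := qmk 0 0 1 0

lemma jq_ne : jq ≠ 0 := by
  intro h; have := congrArg QuaternionAlgebra.imJ h; simp [jq] at this

lemma conj_of_swap (x z a : Quaternion ℝ) (ha : a ≠ 0) (h : a * z = x * a) :
    x = a * z * a⁻¹ := by
  rw [h, mul_assoc, mul_inv_cancel₀ ha, mul_one]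

lemma conj_symm {x s a : Quaternion ℝ} (ha : a ≠ 0) (h : x = a * s * a⁻¹) :
    s = a⁻¹ * x * (a⁻¹)⁻¹ := by
  subst h
  rw [inv_inv]
  simp [mul_assoc, ha]

lemma conj_trans {x s u a b : Quaternion ℝ} (ha : a ≠ 0) (hb : b ≠ 0)
    (h1 : x = a * s * a⁻¹) (h2 : s = b * u * b⁻¹) :
    x = (a * b) * u * (a * b)⁻¹ := by
  subst h1 h2
  rw [mul_inv_rev]
  simp [mul_assoc]

lemma term_decomp (q : Quaternion ℝ) (v : ℂ) :
    q * (v : Quaternion ℝ) = (((⟨q.re, q.imI⟩ : ℂ) * v : ℂ) : Quaternion ℝ)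
      + (((⟨q.imJ, q.imK⟩ : ℂ) * (starRingEnd ℂ v) : ℂ) : Quaternion ℝ) * jq := by
  ext <;> simp [jq, Quaternion.re_mul, Quaternion.imI_mul, Quaternion.imJ_mul, Quaternion.imK_mul,
    Complex.mul_re, Complex.mul_im] <;> ring

lemma coe_pow (v : ℂ) (m : ℕ) : ((v ^ m : ℂ) : Quaternion ℝ) = (v : Quaternion ℝ) ^ m :=
  map_pow Quaternion.ofComplex v m

lemma star_coe_conj (w : ℂ) :
    ((starRingEnd ℂ w : ℂ) : Quaternion ℝ) = jq * (w : Quaternion ℝ) * jq⁻¹ := by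
  refine conj_of_swap _ _ _ jq_ne ?_
  ext <;> simp [jq, Quaternion.re_mul, Quaternion.imI_mul, Quaternion.imJ_mul, Quaternion.imK_mul]

lemma conj_to_complex (x : Quaternion ℝ) (hx : ¬(x.imI = 0 ∧ x.imJ = 0 ∧ x.imK = 0)) :
    ∃ a : Quaternion ℝ, a ≠ 0 ∧
      x = a * (((⟨x.re, Real.sqrt (x.imI^2 + x.imJ^2 + x.imK^2)⟩ : ℂ) : Quaternion ℝ)) * a⁻¹ := by
  set r := Real.sqrt (x.imI^2 + x.imJ^2 + x.imK^2) with hrdef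
  have hs : 0 < x.imI^2 + x.imJ^2 + x.imK^2 := by
    rcases not_and_or.1 hx with h | h
    · positivity
    rcases not_and_or.1 h with h | h <;> positivity
  have hr : 0 < r := Real.sqrt_pos.2 hs
  have hr2 : r^2 = x.imI^2 + x.imJ^2 + x.imK^2 := Real.sq_sqrt hs.le
  by_cases hc : x.imJ = 0 ∧ x.imK = 0 ∧ x.imI + r = 0
  · obtain ⟨h1, h2, h3⟩ := hc
    refine ⟨qmk 0 0 1 0, ?_, conj_of_swap _ _ _ ?_ ?_⟩
    · intro h; have := congrArg QuaternionAlgebra.imJ h; simp at this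
    · intro h; have := congrArg QuaternionAlgebra.imJ h; simp at this
    · ext <;> simp [Quaternion.re_mul, Quaternion.imI_mul, Quaternion.imJ_mul, Quaternion.imK_mul,
        h1, h2] <;> linarith
  · refine ⟨qmk 0 (x.imI + r) x.imJ x.imK, ?_, conj_of_swap _ _ _ ?_ ?_⟩
    · intro h
      rw [Quaternion.ext_iff] at h
      simp at h
      exact hc (by tauto)
    · intro h
      rw [Quaternion.ext_iff] at h
      simp at h
      exact hc (by tauto)
    · ext <;> simp [Quaternion.re_mul, Quaternion.imI_mul, Quaternion.imJ_mul, Quaternion.imK_mul] <;>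
        nlinarith [hr2]

end
end SphAux

/-- The spherical zeros of a simple quaternionic polynomial with `q n ≠ 0` are distributed
in at most `⌊n/2⌋` conjugacy classes. -/
theorem spherical_zeros_in_at_most_half_n_conjugacy_classes
    (n : ℕ) (q : ℕ → Quaternion ℝ) (hq : q n ≠ 0) :
    ∃ S : Finset (Quaternion ℝ), S.card ≤ n / 2 ∧
      ∀ x : Quaternion ℝ, IsSphericalZero n q x →
        ∃ s ∈ S, ∃ a : Quaternion ℝ, a ≠ 0 ∧ x = a * s * a⁻¹ := by
  classical
  open Quaternion Polynomial SphAux in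
  set α : ℕ → ℂ := fun m => ⟨(q m).re, (q m).imI⟩ with hα
  set β : ℕ → ℂ := fun m => ⟨(q m).imJ, (q m).imK⟩ with hβ
  set F : Polynomial ℂ := ∑ m ∈ Finset.range (n+1), Polynomial.C (α m) * Polynomial.X ^ m with hF
  set G : Polynomial ℂ := ∑ m ∈ Finset.range (n+1), Polynomial.C (β m) * Polynomial.X ^ m with hG
  have hFeval : ∀ w : ℂ, F.eval w = ∑ m ∈ Finset.range (n+1), α m * w ^ m := by
    intro w; simp [hF, Polynomial.eval_finset_sum]
  have hGeval : ∀ w : ℂ, G.eval w = ∑ m ∈ Finset.range (n+1), β m * w ^ m := by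
    intro w; simp [hG, Polynomial.eval_finset_sum]
  have hdec : ∀ w : ℂ, (∑ m ∈ Finset.range (n+1), q m * ((w : Quaternion ℝ)) ^ m)
      = ((F.eval w : ℂ) : Quaternion ℝ)
        + ((G.eval (starRingEnd ℂ w) : ℂ) : Quaternion ℝ) * SphAux.jq := by
    intro w
    rw [hFeval, hGeval]
    rw [show ((∑ m ∈ Finset.range (n+1), α m * w ^ m : ℂ) : Quaternion ℝ)
        = ∑ m ∈ Finset.range (n+1), ((α m * w ^ m : ℂ) : Quaternion ℝ) from
      map_sum Quaternion.ofComplex _ _]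
    rw [show ((∑ m ∈ Finset.range (n+1), β m * (starRingEnd ℂ w) ^ m : ℂ) : Quaternion ℝ)
        = ∑ m ∈ Finset.range (n+1), ((β m * (starRingEnd ℂ w) ^ m : ℂ) : Quaternion ℝ) from
      map_sum Quaternion.ofComplex _ _]
    rw [Finset.sum_mul, ← Finset.sum_add_distrib]
    refine Finset.sum_congr rfl fun m _ => ?_
    rw [← SphAux.coe_pow, SphAux.term_decomp (q m) (w ^ m)]
    simp [map_pow]
    rfl
  have hzero : ∀ w : ℂ, (∑ m ∈ Finset.range (n+1), q m * ((w : Quaternion ℝ)) ^ m) = 0 →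
      F.eval w = 0 ∧ G.eval (starRingEnd ℂ w) = 0 := by
    intro w h
    rw [hdec w] at h
    have h1 := congrArg QuaternionAlgebra.re h
    have h2 := congrArg QuaternionAlgebra.imI h
    have h3 := congrArg QuaternionAlgebra.imJ h
    have h4 := congrArg QuaternionAlgebra.imK h
    simp [SphAux.jq, Quaternion.re_mul, Quaternion.imI_mul, Quaternion.imJ_mul,
      Quaternion.imK_mul] at h1 h2 h3 h4
    exact ⟨Complex.ext h1 h2, Complex.ext h3 h4⟩
  -- choose the nonzero polynomial H
  have hFcoeff : F.coeff n = α n := by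
    rw [hF, Polynomial.finset_sum_coeff]
    simp [Polynomial.coeff_C_mul, Polynomial.coeff_X_pow]
  have hGcoeff : G.coeff n = β n := by
    rw [hG, Polynomial.finset_sum_coeff]
    simp [Polynomial.coeff_C_mul, Polynomial.coeff_X_pow]
  have hFdeg : F.natDegree ≤ n := by
    refine Polynomial.natDegree_sum_le_of_forall_le _ _ fun m hm => ?_
    refine le_trans (Polynomial.natDegree_mul_le) ?_
    simp only [Polynomial.natDegree_C, Polynomial.natDegree_X_pow, zero_add]
    exact Nat.lt_succ_iff.mp (Finset.mem_range.mp hm)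
  have hGdeg : G.natDegree ≤ n := by
    refine Polynomial.natDegree_sum_le_of_forall_le _ _ fun m hm => ?_
    refine le_trans (Polynomial.natDegree_mul_le) ?_
    simp only [Polynomial.natDegree_C, Polynomial.natDegree_X_pow, zero_add]
    exact Nat.lt_succ_iff.mp (Finset.mem_range.mp hm)
  set H : Polynomial ℂ := if α n ≠ 0 then F else G with hH
  have hH0 : H ≠ 0 := by
    rw [hH]
    split_ifs with h
    · intro h0; rw [h0] at hFcoeff; simp at hFcoeff; exact h hFcoeff.symm
    · push_neg at h
      have hβn : β n ≠ 0 := by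
        intro hb
        apply hq
        have h1 : (q n).re = 0 := congrArg Complex.re h
        have h2 : (q n).imI = 0 := congrArg Complex.im h
        have h3 : (q n).imJ = 0 := congrArg Complex.re hb
        have h4 : (q n).imK = 0 := congrArg Complex.im hb
        ext <;> simp [h1, h2, h3, h4]
      intro h0; rw [h0] at hGcoeff; simp at hGcoeff; exact hβn hGcoeff.symm
  have hHdeg : H.natDegree ≤ n := by
    rw [hH]; split_ifs <;> assumption
  set T : Finset ℂ :=
    H.roots.toFinset.filter (fun z => 0 < z.im ∧ H.IsRoot (starRingEnd ℂ z)) with hT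
  have hTcard : T.card ≤ n / 2 := by
    have hinj : Function.Injective (starRingEnd ℂ) := (starRingEnd ℂ).injective
    have hdisj : Disjoint T (T.image (starRingEnd ℂ)) := by
      rw [Finset.disjoint_left]
      intro z hz hz'
      obtain ⟨w, hw, hwz⟩ := Finset.mem_image.mp hz'
      have h1 : 0 < z.im := (Finset.mem_filter.mp hz).2.1
      have h2 : 0 < w.im := (Finset.mem_filter.mp hw).2.1
      have : z.im = -w.im := by rw [← hwz]; simp
      linarith
    have hsub : T ∪ T.image (starRingEnd ℂ) ⊆ H.roots.toFinset := by
      refine Finset.union_subset (Finset.filter_subset _ _) ?_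
      intro z hz
      obtain ⟨w, hw, hwz⟩ := Finset.mem_image.mp hz
      have hroot : H.IsRoot (starRingEnd ℂ w) := (Finset.mem_filter.mp hw).2.2
      rw [Multiset.mem_toFinset, Polynomial.mem_roots hH0]
      rw [← hwz]; exact hroot
    have hcard2 : T.card * 2 ≤ n := by
      have h1 : (T ∪ T.image (starRingEnd ℂ)).card = T.card + T.card := by
        rw [Finset.card_union_of_disjoint hdisj, Finset.card_image_of_injective _ hinj]
      have h2 : (T ∪ T.image (starRingEnd ℂ)).card ≤ H.roots.toFinset.card :=
        Finset.card_le_card hsub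
      have h3 : H.roots.toFinset.card ≤ Multiset.card H.roots := Multiset.toFinset_card_le _
      have h4 : Multiset.card H.roots ≤ H.natDegree := Polynomial.card_roots' H
      omega
    exact (Nat.le_div_iff_mul_le two_pos).mpr hcard2
  refine ⟨T.image (fun z : ℂ => (z : Quaternion ℝ)), ?_, ?_⟩
  · exact le_trans Finset.card_image_le hTcard
  intro x hsx
  obtain ⟨hxz, hxnr, hall⟩ := hsx
  set r : ℝ := Real.sqrt (x.imI^2 + x.imJ^2 + x.imK^2) with hrdef
  set zc : ℂ := ⟨x.re, r⟩ with hzc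
  obtain ⟨a, ha, hconj⟩ := SphAux.conj_to_complex x hxnr
  have hrpos : 0 < r := by
    refine Real.sqrt_pos.2 ?_
    rcases not_and_or.1 hxnr with h | h
    · positivity
    rcases not_and_or.1 h with h | h <;> positivity
  -- zc and conj zc are zeros of p
  have hz1 : IsZero n q (zc : Quaternion ℝ) := by
    refine hall _ ⟨a⁻¹, inv_ne_zero ha, SphAux.conj_symm ha hconj⟩
  have hz2 : IsZero n q ((starRingEnd ℂ zc : ℂ) : Quaternion ℝ) := by
    refine hall _ ⟨SphAux.jq * a⁻¹, mul_ne_zero SphAux.jq_ne (inv_ne_zero ha), ?_⟩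
    exact SphAux.conj_trans SphAux.jq_ne (inv_ne_zero ha) (SphAux.star_coe_conj zc)
      (SphAux.conj_symm ha hconj)
  have hFG1 := hzero zc hz1
  have hFG2 := hzero (starRingEnd ℂ zc) hz2
  rw [Complex.conj_conj] at hFG2
  have hHroot1 : H.IsRoot zc := by
    rw [hH]; split_ifs
    · exact hFG1.1
    · exact hFG2.2
  have hHroot2 : H.IsRoot (starRingEnd ℂ zc) := by
    rw [hH]; split_ifs
    · exact hFG2.1
    · exact hFG1.2
  have hmem : zc ∈ T := by
    rw [hT, Finset.mem_filter, Multiset.mem_toFinset, Polynomial.mem_roots hH0]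
    exact ⟨hHroot1, by simp [hzc, hrpos], hHroot2⟩
  exact ⟨(zc : Quaternion ℝ), Finset.mem_image_of_mem (fun z : ℂ => (z : Quaternion ℝ)) hmem, a, ha, hconj⟩
end

section
/- Let n ∈ ℕ and let q : ℕ → ℍ, with derived polynomials f₁, f₂ and discriminant polynomial p̃ = f₁·f̄₁ + f₂·f̄₂. Then for every real number t, the value p̃(t) is the real number |f₁(t)|² + |f₂(t)|², which equals the squared norm (normSq) of the quaternion p(t) = ∑_{m=0}^{n} (q m)·((t : ℍ))^m. In particular p̃(t) ≥ 0 for all real t, and p̃(t) = 0 if and only if the real quaternion t is a zero of p. -/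
noncomputable section

/-- The quaternion imaginary unit `k`. -/
def qk : Quaternion ℝ := ⟨0, 0, 0, 1⟩

/-- Evaluation of the first derived polynomial `f₁(t) = ∑ t₁⁽ᵐ⁾ tᵐ`,
where `q m = t₁⁽ᵐ⁾ + t₂⁽ᵐ⁾·j` and `t₁⁽ᵐ⁾ = (q m).re + (q m).imI·I`. -/
def f1 (n : ℕ) (q : ℕ → Quaternion ℝ) (z : ℂ) : ℂ :=
  ∑ m ∈ Finset.range (n + 1), (⟨(q m).re, (q m).imI⟩ : ℂ) * z ^ m

/-- Evaluation of the second derived polynomial `f₂(t) = ∑ t₂⁽ᵐ⁾ tᵐ`,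
where `t₂⁽ᵐ⁾ = (q m).imJ + (q m).imK·I`. -/
def f2 (n : ℕ) (q : ℕ → Quaternion ℝ) (z : ℂ) : ℂ :=
  ∑ m ∈ Finset.range (n + 1), (⟨(q m).imJ, (q m).imK⟩ : ℂ) * z ^ m

/-- Evaluation of `f̄₁`, obtained from `f₁` by conjugating each coefficient. -/
def f1b (n : ℕ) (q : ℕ → Quaternion ℝ) (z : ℂ) : ℂ :=
  ∑ m ∈ Finset.range (n + 1), (starRingEnd ℂ) (⟨(q m).re, (q m).imI⟩ : ℂ) * z ^ m

/-- Evaluation of `f̄₂`, obtained from `f₂` by conjugating each coefficient. -/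
def f2b (n : ℕ) (q : ℕ → Quaternion ℝ) (z : ℂ) : ℂ :=
  ∑ m ∈ Finset.range (n + 1), (starRingEnd ℂ) (⟨(q m).imJ, (q m).imK⟩ : ℂ) * z ^ m

/-- Evaluation of the discriminant polynomial `p̃ = f₁·f̄₁ + f₂·f̄₂`. -/
def ptilde (n : ℕ) (q : ℕ → Quaternion ℝ) (z : ℂ) : ℂ :=
  f1 n q z * f1b n q z + f2 n q z * f2b n q z

/-- For every real `t`, the value `p̃(t)` of the discriminant polynomial is the real number
`|f₁(t)|² + |f₂(t)|²`, which equals `normSq` of the quaternion `p(t)`.  In particular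
`p̃(t) ≥ 0` for real `t`, and `p̃(t) = 0` iff the real quaternion `t` is a zero of `p`. -/
theorem discriminant_at_real_values
    (n : ℕ) (q : ℕ → Quaternion ℝ) (t : ℝ) :
    ptilde n q (t : ℂ) =
        ((‖f1 n q (t : ℂ)‖ ^ 2 + ‖f2 n q (t : ℂ)‖ ^ 2 : ℝ) : ℂ) ∧
      ‖f1 n q (t : ℂ)‖ ^ 2 + ‖f2 n q (t : ℂ)‖ ^ 2 =
        Quaternion.normSq (∑ m ∈ Finset.range (n + 1), q m * ((t : Quaternion ℝ)) ^ m) ∧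
      0 ≤ (ptilde n q (t : ℂ)).re ∧
      (ptilde n q (t : ℂ) = 0 ↔
        ∑ m ∈ Finset.range (n + 1), q m * ((t : Quaternion ℝ)) ^ m = 0) := by

  have hf1b : f1b n q (t : ℂ) = (starRingEnd ℂ) (f1 n q (t : ℂ)) := by
    simp [f1, f1b, map_sum, map_mul, map_pow, Complex.conj_ofReal]
  have hf2b : f2b n q (t : ℂ) = (starRingEnd ℂ) (f2 n q (t : ℂ)) := by
    simp [f2, f2b, map_sum, map_mul, map_pow, Complex.conj_ofReal]
  have hpt : ptilde n q (t : ℂ) =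
      ((‖f1 n q (t : ℂ)‖ ^ 2 + ‖f2 n q (t : ℂ)‖ ^ 2 : ℝ) : ℂ) := by
    rw [ptilde, hf1b, hf2b, Complex.mul_conj, Complex.mul_conj]
    push_cast [Complex.sq_norm]
    ring
  set S := ∑ m ∈ Finset.range (n + 1), q m * ((t : Quaternion ℝ)) ^ m with hS
  have hcoe : ∀ m : ℕ, ((t : Quaternion ℝ)) ^ m = ((t ^ m : ℝ) : Quaternion ℝ) := by
    intro m; push_cast; ring
  have hsum_re : ∀ (f : ℕ → Quaternion ℝ) (s : Finset ℕ),
      (∑ m ∈ s, f m).re = ∑ m ∈ s, (f m).re :=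
    fun f s => map_sum (QuaternionAlgebra.reₗ (R := ℝ) (-1) 0 (-1)) f s
  have hsum_imI : ∀ (f : ℕ → Quaternion ℝ) (s : Finset ℕ),
      (∑ m ∈ s, f m).imI = ∑ m ∈ s, (f m).imI :=
    fun f s => map_sum (QuaternionAlgebra.imIₗ (R := ℝ) (-1) 0 (-1)) f s
  have hsum_imJ : ∀ (f : ℕ → Quaternion ℝ) (s : Finset ℕ),
      (∑ m ∈ s, f m).imJ = ∑ m ∈ s, (f m).imJ :=
    fun f s => map_sum (QuaternionAlgebra.imJₗ (R := ℝ) (-1) 0 (-1)) f s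
  have hsum_imK : ∀ (f : ℕ → Quaternion ℝ) (s : Finset ℕ),
      (∑ m ∈ s, f m).imK = ∑ m ∈ s, (f m).imK :=
    fun f s => map_sum (QuaternionAlgebra.imKₗ (R := ℝ) (-1) 0 (-1)) f s
  have hre : S.re = (f1 n q (t : ℂ)).re := by
    rw [hS, hsum_re, f1, Complex.re_sum]
    refine Finset.sum_congr rfl fun m _ => ?_
    simp [← Quaternion.coe_pow, ← Complex.ofReal_pow]
  have himI : S.imI = (f1 n q (t : ℂ)).im := by
    rw [hS, hsum_imI, f1, Complex.im_sum]
    refine Finset.sum_congr rfl fun m _ => ?_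
    simp [← Quaternion.coe_pow, ← Complex.ofReal_pow]
  have himJ : S.imJ = (f2 n q (t : ℂ)).re := by
    rw [hS, hsum_imJ, f2, Complex.re_sum]
    refine Finset.sum_congr rfl fun m _ => ?_
    simp [← Quaternion.coe_pow, ← Complex.ofReal_pow]
  have himK : S.imK = (f2 n q (t : ℂ)).im := by
    rw [hS, hsum_imK, f2, Complex.im_sum]
    refine Finset.sum_congr rfl fun m _ => ?_
    simp [← Quaternion.coe_pow, ← Complex.ofReal_pow]
  have hns : ‖f1 n q (t : ℂ)‖ ^ 2 + ‖f2 n q (t : ℂ)‖ ^ 2 =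
      Quaternion.normSq S := by
    rw [Quaternion.normSq_def', hre, himI, himJ, himK, Complex.sq_norm, Complex.sq_norm,
      Complex.normSq_apply, Complex.normSq_apply]
    ring
  refine ⟨hpt, hns, ?_, ?_⟩
  · rw [hpt, Complex.ofReal_re]
    positivity
  · rw [hpt]
    constructor
    · intro h
      have h' : ‖f1 n q (t : ℂ)‖ ^ 2 + ‖f2 n q (t : ℂ)‖ ^ 2 = 0 := by
        exact_mod_cast h
      rw [hns] at h'
      exact Quaternion.normSq_eq_zero.mp h'
    · intro h
      have : Quaternion.normSq S = 0 := by rw [h]; simp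
      rw [← hns] at this
      exact_mod_cast this
end
end

section
/- Let n ∈ ℕ and let q : ℕ → ℍ with constant coefficient q 0 = 0 or q 0 = 1, with derived polynomials f₁, f₂ and discriminant polynomial p̃ = f₁·f̄₁ + f₂·f̄₂. Suppose η ∈ ℂ is nonreal (Im η ≠ 0), p̃(η) = 0, and D := |f₁(η)|² + |f₂(η)|² ≠ 0. Then the quaternion ω = (1/D)·( |f₂(η)|²·η + |f₁(η)|²·(conj η) − 2·(Im η)·( f₂(η)·conj(f₁(η)) )·k ) — where each complex number w is identified with the quaternion w.re + w.im·i and all products are taken in ℍ — is a zero of p, i.e., ∑_{m=0}^{n} (q m)·ω^m = 0. -/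
noncomputable section

/-- The isolated zero `ω` associated to a nonreal root `η` of the discriminant polynomial,
in the case `D = |f₁(η)|² + |f₂(η)|² ≠ 0`:
`ω = (1/D)·(|f₂(η)|²·η + |f₁(η)|²·(conj η) − 2·(Im η)·(f₂(η)·conj(f₁(η)))·k)`. -/
def omega1 (n : ℕ) (q : ℕ → Quaternion ℝ) (η : ℂ) : Quaternion ℝ :=
  (((‖f1 n q η‖ ^ 2 + ‖f2 n q η‖ ^ 2)⁻¹ : ℝ) : Quaternion ℝ) *
    (((‖f2 n q η‖ ^ 2 : ℝ) : Quaternion ℝ) * cq η +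
     ((‖f1 n q η‖ ^ 2 : ℝ) : Quaternion ℝ) * cq ((starRingEnd ℂ) η) -
     ((2 * η.im : ℝ) : Quaternion ℝ) *
       (cq (f2 n q η * (starRingEnd ℂ) (f1 n q η)) * qk))

/-- The isolated zero `ω` associated to a nonreal root `η` of the discriminant polynomial,
in the case `D' = |f₁(conj η)|² + |f₂(conj η)|² ≠ 0`:
`ω = (1/D')·(|f₁(conj η)|²·η + |f₂(conj η)|²·(conj η) + 2·(Im η)·(f₂(conj η)·conj(f₁(conj η)))·k)`. -/
def omega2 (n : ℕ) (q : ℕ → Quaternion ℝ) (η : ℂ) : Quaternion ℝ :=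
  (((‖f1 n q ((starRingEnd ℂ) η)‖ ^ 2 +
      ‖f2 n q ((starRingEnd ℂ) η)‖ ^ 2)⁻¹ : ℝ) : Quaternion ℝ) *
    (((‖f1 n q ((starRingEnd ℂ) η)‖ ^ 2 : ℝ) : Quaternion ℝ) * cq η +
     ((‖f2 n q ((starRingEnd ℂ) η)‖ ^ 2 : ℝ) : Quaternion ℝ) * cq ((starRingEnd ℂ) η) +
     ((2 * η.im : ℝ) : Quaternion ℝ) *
       (cq (f2 n q ((starRingEnd ℂ) η) * (starRingEnd ℂ) (f1 n q ((starRingEnd ℂ) η))) * qk))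

def qj : Quaternion ℝ := ⟨0, 0, 1, 0⟩

@[simp] lemma cq_re (z : ℂ) : (cq z).re = z.re := rfl
@[simp] lemma cq_imI (z : ℂ) : (cq z).imI = z.im := rfl
@[simp] lemma cq_imJ (z : ℂ) : (cq z).imJ = 0 := rfl
@[simp] lemma cq_imK (z : ℂ) : (cq z).imK = 0 := rfl
@[simp] lemma qj_re : qj.re = 0 := rfl
@[simp] lemma qj_imI : qj.imI = 0 := rfl
@[simp] lemma qj_imJ : qj.imJ = 1 := rfl
@[simp] lemma qj_imK : qj.imK = 0 := rfl
@[simp] lemma qk_re : qk.re = 0 := rfl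
@[simp] lemma qk_imI : qk.imI = 0 := rfl
@[simp] lemma qk_imJ : qk.imJ = 0 := rfl
@[simp] lemma qk_imK : qk.imK = 1 := rfl

@[simp] lemma q0_re : (0 : Quaternion ℝ).re = 0 := rfl
@[simp] lemma q0_imI : (0 : Quaternion ℝ).imI = 0 := rfl
@[simp] lemma q0_imJ : (0 : Quaternion ℝ).imJ = 0 := rfl
@[simp] lemma q0_imK : (0 : Quaternion ℝ).imK = 0 := rfl

lemma cq_sum_s11 {ι : Type*} (s : Finset ι) (f : ι → ℂ) : cq (∑ i ∈ s, f i) = ∑ i ∈ s, cq (f i) := by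
  classical
  induction s using Finset.induction with
  | empty => simp [Quaternion.ext_iff]
  | insert _ _ h ih => simp [Finset.sum_insert h, cq_add, ih]

lemma key1 (Q : Quaternion ℝ) (a b z : ℂ) :
    Q * ((cq a + cq b * qj) * cq z) =
      cq (((⟨Q.re, Q.imI⟩ : ℂ) * a - (⟨Q.imJ, Q.imK⟩ : ℂ) * (starRingEnd ℂ) b) * z) +
      cq (((⟨Q.re, Q.imI⟩ : ℂ) * b + (⟨Q.imJ, Q.imK⟩ : ℂ) * (starRingEnd ℂ) a) *
        (starRingEnd ℂ) z) * qj := by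
  ext <;>
    simp [Quaternion.ext_iff, Complex.mul_re, Complex.mul_im,
      Quaternion.re_mul, Quaternion.imI_mul, Quaternion.imJ_mul, Quaternion.imK_mul] <;>
    ring

lemma stuff_mul (a b z : ℂ) :
    (((‖a‖ ^ 2 : ℝ) : Quaternion ℝ) * cq z +
     ((‖b‖ ^ 2 : ℝ) : Quaternion ℝ) * cq ((starRingEnd ℂ) z) -
     ((2 * z.im : ℝ) : Quaternion ℝ) * (cq (a * b) * qk)) * (cq a + cq b * qj) =
    ((‖a‖ ^ 2 + ‖b‖ ^ 2 : ℝ) : Quaternion ℝ) * ((cq a + cq b * qj) * cq z) := by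
  ext <;>
    simp [Complex.sq_norm, Complex.normSq_apply, Complex.mul_re, Complex.mul_im,
      Quaternion.re_mul, Quaternion.imI_mul, Quaternion.imJ_mul, Quaternion.imK_mul] <;>
    ring


/-- If `η` is a nonreal root of the discriminant polynomial `p̃` and
`D = |f₁(η)|² + |f₂(η)|² ≠ 0`, then the quaternion
`ω = (1/D)·(|f₂(η)|²·η + |f₁(η)|²·(conj η) − 2·(Im η)·(f₂(η)·conj(f₁(η)))·k)`
is a zero of the simple quaternionic polynomial `p`. -/
theorem omega_formula_one_gives_zero
    (n : ℕ) (q : ℕ → Quaternion ℝ) (h0 : q 0 = 0 ∨ q 0 = 1) (η : ℂ)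
    (hη : η.im ≠ 0) (hroot : ptilde n q η = 0)
    (hD : ‖f1 n q η‖ ^ 2 + ‖f2 n q η‖ ^ 2 ≠ 0) :
    ∑ m ∈ Finset.range (n + 1), q m * (omega1 n q η) ^ m = 0 := by
  set a : ℂ := f2 n q η with ha
  set b : ℂ := (starRingEnd ℂ) (f1 n q η) with hb
  set s : Quaternion ℝ := cq a + cq b * qj with hs
  set D : ℝ := ‖f1 n q η‖ ^ 2 + ‖f2 n q η‖ ^ 2 with hDdef
  -- ω * s = s * cq η
  have habs : ‖b‖ = ‖f1 n q η‖ := by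
    rw [hb]; exact Complex.norm_conj _
  have hωs : omega1 n q η * s = s * cq η := by
    have h1 := stuff_mul a b η
    have hab : a * b = f2 n q η * (starRingEnd ℂ) (f1 n q η) := by rw [ha, hb]
    rw [hab, habs] at h1
    have hDcomm : (‖a‖ ^ 2 + ‖f1 n q η‖ ^ 2 : ℝ) = D := by
      rw [hDdef, ha]; ring
    rw [hDcomm] at h1
    calc omega1 n q η * s
        = ((D⁻¹ : ℝ) : Quaternion ℝ) *
          ((((‖a‖ ^ 2 : ℝ) : Quaternion ℝ) * cq η +
            ((‖f1 n q η‖ ^ 2 : ℝ) : Quaternion ℝ) * cq ((starRingEnd ℂ) η) -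
            ((2 * η.im : ℝ) : Quaternion ℝ) *
              (cq (f2 n q η * (starRingEnd ℂ) (f1 n q η)) * qk)) * s) := by
          rw [omega1, ← ha, mul_assoc]
      _ = ((D⁻¹ : ℝ) : Quaternion ℝ) * (((D : ℝ) : Quaternion ℝ) * (s * cq η)) := by
          rw [h1, hs]
      _ = s * cq η := by
          rw [← mul_assoc, ← Quaternion.coe_mul, inv_mul_cancel₀ hD, Quaternion.coe_one, one_mul]
  -- powers
  have hpow : ∀ m : ℕ, omega1 n q η ^ m * s = s * cq (η ^ m) := by
    intro m
    induction m with
    | zero => simp [Quaternion.ext_iff, Quaternion.re_mul, Quaternion.imI_mul, Quaternion.imJ_mul, Quaternion.imK_mul]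
    | succ m ih =>
        rw [pow_succ, mul_assoc, hωs, ← mul_assoc, ih, mul_assoc, ← cq_mul, ← pow_succ]
  -- sum
  have hsum : (∑ m ∈ Finset.range (n + 1), q m * (omega1 n q η) ^ m) * s = 0 := by
    rw [Finset.sum_mul]
    have : ∀ m ∈ Finset.range (n + 1),
        q m * (omega1 n q η) ^ m * s =
        cq (((⟨(q m).re, (q m).imI⟩ : ℂ) * a - (⟨(q m).imJ, (q m).imK⟩ : ℂ) * (starRingEnd ℂ) b)
            * η ^ m) +
        cq (((⟨(q m).re, (q m).imI⟩ : ℂ) * b + (⟨(q m).imJ, (q m).imK⟩ : ℂ) * (starRingEnd ℂ) a)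
            * ((starRingEnd ℂ) η) ^ m) * qj := by
      intro m _
      rw [mul_assoc, hpow m, hs, key1, map_pow]
    rw [Finset.sum_congr rfl this, Finset.sum_add_distrib, ← Finset.sum_mul, ← cq_sum_s11, ← cq_sum_s11]
    have e1 : (∑ m ∈ Finset.range (n + 1),
        ((⟨(q m).re, (q m).imI⟩ : ℂ) * a - (⟨(q m).imJ, (q m).imK⟩ : ℂ) * (starRingEnd ℂ) b)
          * η ^ m) = a * f1 n q η - (starRingEnd ℂ) b * f2 n q η := by
      rw [f1, f2, Finset.mul_sum, Finset.mul_sum, ← Finset.sum_sub_distrib]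
      exact Finset.sum_congr rfl fun m _ => by ring
    have e2 : (∑ m ∈ Finset.range (n + 1),
        ((⟨(q m).re, (q m).imI⟩ : ℂ) * b + (⟨(q m).imJ, (q m).imK⟩ : ℂ) * (starRingEnd ℂ) a)
          * ((starRingEnd ℂ) η) ^ m) =
        b * (starRingEnd ℂ) (f1b n q η) + (starRingEnd ℂ) a * (starRingEnd ℂ) (f2b n q η) := by
      rw [f1b, f2b, map_sum, map_sum, Finset.mul_sum, Finset.mul_sum, ← Finset.sum_add_distrib]
      refine Finset.sum_congr rfl fun m _ => ?_
      simp only [map_mul, map_pow, Complex.conj_conj]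
      ring
    have hz1 : a * f1 n q η - (starRingEnd ℂ) b * f2 n q η = 0 := by
      rw [ha, hb, Complex.conj_conj]; ring
    have hz2 : b * (starRingEnd ℂ) (f1b n q η) + (starRingEnd ℂ) a * (starRingEnd ℂ) (f2b n q η)
        = 0 := by
      rw [ha, hb, ← map_mul, ← map_mul, ← map_add, ← ptilde, hroot, map_zero]
    rw [e1, e2, hz1, hz2]
    simp [Quaternion.ext_iff, Quaternion.re_mul, Quaternion.imI_mul, Quaternion.imJ_mul, Quaternion.imK_mul]
  have hsne : s ≠ 0 := by
    intro h
    rw [hs] at h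
    have hcomp : a.re = 0 ∧ a.im = 0 ∧ b.re = 0 ∧ b.im = 0 := by
      simpa [Quaternion.ext_iff, Quaternion.re_mul, Quaternion.imI_mul, Quaternion.imJ_mul, Quaternion.imK_mul] using h
    obtain ⟨h1, h2, h3, h4⟩ := hcomp
    have hf2 : f2 n q η = 0 := by rw [← ha]; exact Complex.ext h1 h2
    have hb0 : b = 0 := Complex.ext h3 h4
    have hf1 : f1 n q η = 0 := by
      have := congrArg (starRingEnd ℂ) (hb0.symm.trans hb).symm
      simpa using this
    exact hD (by rw [hDdef, hf1, hf2]; simp)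
  rcases mul_eq_zero.mp hsum with h | h
  · exact h
  · exact absurd h hsne
end
end

section
/- Let n ∈ ℕ and let q : ℕ → ℍ with constant coefficient q 0 = 0 or q 0 = 1, with derived polynomials f₁, f₂. Suppose η ∈ ℂ is nonreal (Im η ≠ 0) and f₁(η) = f₂(η) = 0 and f₁(conj η) = f₂(conj η) = 0. Then every quaternion conjugate to η is a zero of p; equivalently, every x ∈ ℍ with x.re = η.re and ‖x‖ = |η| satisfies ∑_{m=0}^{n} (q m)·x^m = 0. In particular η determines a spherical zero of p. -/
noncomputable section

def ab (s P : ℝ) : ℕ → ℝ × ℝ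
  | 0 => (0, 1)
  | m + 1 => ((ab s P m).1 * s + (ab s P m).2, -((ab s P m).1 * P))

lemma ab_spec {A : Type*} [Ring A] [Algebra ℝ A] {s P : ℝ} {z : A}
    (hz : z ^ 2 = algebraMap ℝ A s * z - algebraMap ℝ A P) (m : ℕ) :
    z ^ m = algebraMap ℝ A (ab s P m).1 * z + algebraMap ℝ A (ab s P m).2 := by
  induction m with
  | zero => simp [ab]
  | succ m ih =>
    calc z ^ (m + 1) = (algebraMap ℝ A (ab s P m).1 * z + algebraMap ℝ A (ab s P m).2) * z := by
          rw [pow_succ, ih]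
      _ = algebraMap ℝ A (ab s P m).1 * z ^ 2 + algebraMap ℝ A (ab s P m).2 * z := by
          noncomm_ring
      _ = algebraMap ℝ A (ab s P m).1 * (algebraMap ℝ A s * z - algebraMap ℝ A P)
            + algebraMap ℝ A (ab s P m).2 * z := by rw [hz]
      _ = algebraMap ℝ A ((ab s P m).1 * s + (ab s P m).2) * z
            + algebraMap ℝ A (-((ab s P m).1 * P)) := by
          simp only [map_add, map_mul, map_neg]
          noncomm_ring
      _ = _ := by rw [ab]

lemma qsum_re (s : Finset ℕ) (f : ℕ → Quaternion ℝ) :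
    (∑ m ∈ s, f m).re = ∑ m ∈ s, (f m).re :=
  map_sum (AddMonoidHom.mk' QuaternionAlgebra.re (fun _ _ => rfl)) f s

lemma qsum_imI (s : Finset ℕ) (f : ℕ → Quaternion ℝ) :
    (∑ m ∈ s, f m).imI = ∑ m ∈ s, (f m).imI :=
  map_sum (AddMonoidHom.mk' QuaternionAlgebra.imI (fun _ _ => rfl)) f s

lemma qsum_imJ (s : Finset ℕ) (f : ℕ → Quaternion ℝ) :
    (∑ m ∈ s, f m).imJ = ∑ m ∈ s, (f m).imJ :=
  map_sum (AddMonoidHom.mk' QuaternionAlgebra.imJ (fun _ _ => rfl)) f s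

lemma qsum_imK (s : Finset ℕ) (f : ℕ → Quaternion ℝ) :
    (∑ m ∈ s, f m).imK = ∑ m ∈ s, (f m).imK :=
  map_sum (AddMonoidHom.mk' QuaternionAlgebra.imK (fun _ _ => rfl)) f s

/-- from `f(η) = 0` and `f(conj η) = 0` deduce vanishing of the two coefficient sums. -/
lemma coeff_sums_vanish (n : ℕ) (t : ℕ → ℂ) (η : ℂ) (hη : η.im ≠ 0)
    (he : ∑ m ∈ Finset.range (n + 1), t m * η ^ m = 0)
    (hc : ∑ m ∈ Finset.range (n + 1), t m * ((starRingEnd ℂ) η) ^ m = 0) :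
    (∑ m ∈ Finset.range (n + 1),
        ((ab (2 * η.re) (Complex.normSq η) m).1 : ℂ) * t m) = 0 ∧
    (∑ m ∈ Finset.range (n + 1),
        ((ab (2 * η.re) (Complex.normSq η) m).2 : ℂ) * t m) = 0 := by
  set s : ℝ := 2 * η.re
  set P : ℝ := Complex.normSq η
  have hquad : η ^ 2 = algebraMap ℝ ℂ s * η - algebraMap ℝ ℂ P := by
    apply Complex.ext <;> simp [s, P, pow_two, Complex.normSq_apply] <;> ring
  have hquadc : ((starRingEnd ℂ) η) ^ 2 =
      algebraMap ℝ ℂ s * (starRingEnd ℂ) η - algebraMap ℝ ℂ P := by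
    have := congrArg (starRingEnd ℂ) hquad
    simpa [map_pow, map_sub, map_mul, Complex.conj_ofReal] using this
  set U : ℂ := ∑ m ∈ Finset.range (n + 1), ((ab s P m).1 : ℂ) * t m
  set V : ℂ := ∑ m ∈ Finset.range (n + 1), ((ab s P m).2 : ℂ) * t m
  have key : ∀ z : ℂ, z ^ 2 = algebraMap ℝ ℂ s * z - algebraMap ℝ ℂ P →
      ∑ m ∈ Finset.range (n + 1), t m * z ^ m = U * z + V := by
    intro z hz
    rw [show U * z + V = ∑ m ∈ Finset.range (n + 1),
        (((ab s P m).1 : ℂ) * t m * z + ((ab s P m).2 : ℂ) * t m) by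
      rw [Finset.sum_add_distrib, Finset.sum_mul]]
    refine Finset.sum_congr rfl fun m _ => ?_
    rw [ab_spec hz m]
    simp only [Complex.coe_algebraMap]
    ring
  have e1 : U * η + V = 0 := by rw [← key η hquad]; exact he
  have e2 : U * (starRingEnd ℂ) η + V = 0 := by rw [← key _ hquadc]; exact hc
  have hne : η - (starRingEnd ℂ) η ≠ 0 := by
    intro h
    apply hη
    have := sub_eq_zero.mp h
    have him := congrArg Complex.im this
    simp at him
    linarith
  have hU : U = 0 := by
    have : U * (η - (starRingEnd ℂ) η) = 0 := by
      have := sub_eq_zero_of_eq (e1.trans e2.symm)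
      ring_nf at this ⊢
      linear_combination (e1 - e2)
    exact (mul_eq_zero.mp this).resolve_right hne
  have hV : V = 0 := by
    have := e1
    rw [hU, zero_mul, zero_add] at this
    exact this
  exact ⟨hU, hV⟩

theorem common_root_gives_spherical_zero'
    (n : ℕ) (q : ℕ → Quaternion ℝ) (h0 : q 0 = 0 ∨ q 0 = 1) (η : ℂ)
    (hη : η.im ≠ 0)
    (h1 : ∑ m ∈ Finset.range (n + 1), (⟨(q m).re, (q m).imI⟩ : ℂ) * η ^ m = 0)
    (h2 : ∑ m ∈ Finset.range (n + 1), (⟨(q m).imJ, (q m).imK⟩ : ℂ) * η ^ m = 0)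
    (h3 : ∑ m ∈ Finset.range (n + 1), (⟨(q m).re, (q m).imI⟩ : ℂ) * ((starRingEnd ℂ) η) ^ m = 0)
    (h4 : ∑ m ∈ Finset.range (n + 1), (⟨(q m).imJ, (q m).imK⟩ : ℂ) * ((starRingEnd ℂ) η) ^ m = 0) :
    ∀ x : Quaternion ℝ, x.re = η.re → ‖x‖ = ‖η‖ →
      ∑ m ∈ Finset.range (n + 1), q m * x ^ m = 0 := by
  intro x hre hnorm
  set s : ℝ := 2 * η.re
  set P : ℝ := Complex.normSq η
  have hPx : Quaternion.normSq x = P := by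
    rw [Quaternion.normSq_eq_norm_mul_self, hnorm]
    simp [P, ← Complex.sq_norm, pow_two]
  have hx2 : x ^ 2 = algebraMap ℝ (Quaternion ℝ) s * x - algebraMap ℝ (Quaternion ℝ) P := by
    rw [← hPx]
    ext <;>
      simp [s, pow_two, Quaternion.normSq_def', hre, Quaternion.coe_mul_eq_smul] <;> ring
  obtain ⟨hU1, hV1⟩ := coeff_sums_vanish n (fun m => (⟨(q m).re, (q m).imI⟩ : ℂ)) η hη h1 h3
  obtain ⟨hU2, hV2⟩ := coeff_sums_vanish n (fun m => (⟨(q m).imJ, (q m).imK⟩ : ℂ)) η hη h2 h4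
  have hre1 : ∀ (r : ℝ) (z : ℂ), ((r : ℂ) * z).re = r * z.re := by intro r z; simp
  have him1 : ∀ (r : ℝ) (z : ℂ), ((r : ℂ) * z).im = r * z.im := by intro r z; simp
  -- componentwise real sums
  have A1 : ∑ m ∈ Finset.range (n + 1), (ab s P m).1 * (q m).re = 0 := by
    have := congrArg Complex.re hU1
    simpa [Complex.re_sum, hre1] using this
  have A2 : ∑ m ∈ Finset.range (n + 1), (ab s P m).1 * (q m).imI = 0 := by
    have := congrArg Complex.im hU1
    simpa [Complex.im_sum, him1] using this
  have A3 : ∑ m ∈ Finset.range (n + 1), (ab s P m).1 * (q m).imJ = 0 := by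
    have := congrArg Complex.re hU2
    simpa [Complex.re_sum, hre1] using this
  have A4 : ∑ m ∈ Finset.range (n + 1), (ab s P m).1 * (q m).imK = 0 := by
    have := congrArg Complex.im hU2
    simpa [Complex.im_sum, him1] using this
  have B1 : ∑ m ∈ Finset.range (n + 1), (ab s P m).2 * (q m).re = 0 := by
    have := congrArg Complex.re hV1
    simpa [Complex.re_sum, hre1] using this
  have B2 : ∑ m ∈ Finset.range (n + 1), (ab s P m).2 * (q m).imI = 0 := by
    have := congrArg Complex.im hV1
    simpa [Complex.im_sum, him1] using this
  have B3 : ∑ m ∈ Finset.range (n + 1), (ab s P m).2 * (q m).imJ = 0 := by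
    have := congrArg Complex.re hV2
    simpa [Complex.re_sum, hre1] using this
  have B4 : ∑ m ∈ Finset.range (n + 1), (ab s P m).2 * (q m).imK = 0 := by
    have := congrArg Complex.im hV2
    simpa [Complex.im_sum, him1] using this
  have QA : ∑ m ∈ Finset.range (n + 1), (ab s P m).1 • q m = 0 := by
    ext <;> simp only [qsum_re, qsum_imI, qsum_imJ, qsum_imK, Quaternion.re_smul,
      Quaternion.imI_smul, Quaternion.imJ_smul, Quaternion.imK_smul, smul_eq_mul] <;>
      simp [A1, A2, A3, A4, Quaternion.re_zero, Quaternion.imI_zero, Quaternion.imJ_zero, Quaternion.imK_zero]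
  have QB : ∑ m ∈ Finset.range (n + 1), (ab s P m).2 • q m = 0 := by
    ext <;> simp only [qsum_re, qsum_imI, qsum_imJ, qsum_imK, Quaternion.re_smul,
      Quaternion.imI_smul, Quaternion.imJ_smul, Quaternion.imK_smul, smul_eq_mul] <;>
      simp [B1, B2, B3, B4, Quaternion.re_zero, Quaternion.imI_zero, Quaternion.imJ_zero, Quaternion.imK_zero]
  calc ∑ m ∈ Finset.range (n + 1), q m * x ^ m
      = ∑ m ∈ Finset.range (n + 1),
          (((ab s P m).1 • q m) * x + ((ab s P m).2 • q m)) := by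
        refine Finset.sum_congr rfl fun m _ => ?_
        rw [ab_spec hx2 m]
        show q m * (((ab s P m).1 : Quaternion ℝ) * x + ((ab s P m).2 : Quaternion ℝ)) = _
        rw [mul_add, ← mul_assoc, Quaternion.mul_coe_eq_smul, Quaternion.mul_coe_eq_smul,
          smul_mul_assoc]
    _ = (∑ m ∈ Finset.range (n + 1), (ab s P m).1 • q m) * x
          + ∑ m ∈ Finset.range (n + 1), (ab s P m).2 • q m := by
        rw [Finset.sum_add_distrib, Finset.sum_mul]
    _ = 0 := by rw [QA, QB, zero_mul, add_zero]

/-- If `η` is a nonreal complex number with `f₁(η) = f₂(η) = 0` and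
`f₁(conj η) = f₂(conj η) = 0`, then every quaternion conjugate to `η`
(equivalently, every `x ∈ ℍ` with `x.re = Re η` and `‖x‖ = |η|`) is a zero of `p`;
thus `η` determines a spherical zero of `p`. -/
theorem common_root_gives_spherical_zero
    (n : ℕ) (q : ℕ → Quaternion ℝ) (h0 : q 0 = 0 ∨ q 0 = 1) (η : ℂ)
    (hη : η.im ≠ 0)
    (h1 : f1 n q η = 0) (h2 : f2 n q η = 0)
    (h3 : f1 n q ((starRingEnd ℂ) η) = 0) (h4 : f2 n q ((starRingEnd ℂ) η) = 0) :
    ∀ x : Quaternion ℝ, x.re = η.re → ‖x‖ = ‖η‖ →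
      ∑ m ∈ Finset.range (n + 1), q m * x ^ m = 0 :=
  common_root_gives_spherical_zero' n q h0 η hη h1 h2 h3 h4
end
end
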